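/- arXiv:2112.00388 — 16 statements merged into one kernel-verified Lean document; each statement's English description precedes it below -/
import Mathlib

section
/- Let A be a type and k : ℕ. For each j : Fin k with j ≠ 0, let φ_j : A ≃ A be a bijection, and let τ_j be the permutation of Fin k × A defined by τ_j (0, a) = (j, φ_j a), τ_j (j, a) = (0, φ_j⁻¹ a), and τ_j (i, a) = (i, a) for i ∉ {0, j}. If g lies in the subgroup of Equiv.Perm (Fin k × A) generated by {τ_j | j ≠ 0} and g fixes every fiber setwise (that is, the first coordinate of g (i, a) equals i for all i : Fin k and a : A), then g is the identity permutation. -/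
/-- If `g` is in the subgroup generated by the fiber-swapping involutions `τ_j` and `g`
fixes every fiber of `Fin k × A` setwise, then `g = 1`. -/
theorem stmt1 {A : Type*} {k : ℕ} [NeZero k]
    (φ : Fin k → (A ≃ A))
    (τ : Fin k → Equiv.Perm (Fin k × A))
    (hτ0 : ∀ j : Fin k, j ≠ 0 → ∀ a : A, τ j (0, a) = (j, φ j a))
    (hτj : ∀ j : Fin k, j ≠ 0 → ∀ a : A, τ j (j, a) = (0, (φ j).symm a))
    (hτi : ∀ j : Fin k, j ≠ 0 → ∀ i : Fin k, i ≠ 0 → i ≠ j → ∀ a : A, τ j (i, a) = (i, a))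
    (g : Equiv.Perm (Fin k × A))
    (hg : g ∈ Subgroup.closure {x : Equiv.Perm (Fin k × A) | ∃ j : Fin k, j ≠ 0 ∧ x = τ j})
    (hfix : ∀ (i : Fin k) (a : A), (g (i, a)).1 = i) :
    g = 1 := by
  rcases isEmpty_or_nonempty A with hA | hA
  · exact Equiv.ext fun x => (hA.false x.2).elim
  -- the gauge change
  set c : Fin k → (A ≃ A) := fun i => if i = 0 then Equiv.refl A else φ i with hc
  set F : Equiv.Perm (Fin k × A) := Equiv.prodShear (Equiv.refl (Fin k)) c with hF
  -- embedding of Perm (Fin k)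
  set E : Equiv.Perm (Fin k) →* Equiv.Perm (Fin k × A) :=
    MonoidHom.mk' (fun σ => Equiv.prodCongr σ (Equiv.refl A))
      (by intro σ σ'; ext ⟨i, a⟩ <;> simp) with hE
  have hEapp : ∀ (σ : Equiv.Perm (Fin k)) (i : Fin k) (a : A), E σ (i, a) = (σ i, a) := by
    intro σ i a; simp [hE]
  have hFapp : ∀ (i : Fin k) (a : A), F (i, a) = (i, c i a) := by
    intro i a; simp [hF, Equiv.prodShear]
  have hFsymm : ∀ (i : Fin k) (a : A), F⁻¹ (i, a) = (i, (c i).symm a) := by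
    intro i a
    have : F (i, (c i).symm a) = (i, a) := by rw [hFapp]; simp
    calc F⁻¹ (i, a) = F⁻¹ (F (i, (c i).symm a)) := by rw [this]
    _ = (i, (c i).symm a) := by simp
  have key : ∀ j : Fin k, j ≠ 0 → τ j = F * E (Equiv.swap 0 j) * F⁻¹ := by
    intro j hj
    apply Equiv.ext
    rintro ⟨i, a⟩
    have : (F * E (Equiv.swap 0 j) * F⁻¹) (i, a)
        = (Equiv.swap 0 j i, c (Equiv.swap 0 j i) ((c i).symm a)) := by
      simp only [Equiv.Perm.mul_apply]
      rw [hFsymm, hEapp, hFapp]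
    rw [this]
    rcases eq_or_ne i 0 with rfl | hi0
    · rw [Equiv.swap_apply_left, hτ0 j hj]
      simp [hc, hj]
    rcases eq_or_ne i j with rfl | hij
    · rw [Equiv.swap_apply_right, hτj i hj]
      simp [hc, hj]
    · rw [Equiv.swap_apply_of_ne_of_ne hi0 hij, hτi j hj i hi0 hij]
      simp
  -- g lies in the conjugated copy of Perm (Fin k)
  have hsub : Subgroup.closure {x : Equiv.Perm (Fin k × A) | ∃ j : Fin k, j ≠ 0 ∧ x = τ j}
      ≤ Subgroup.map (MulAut.conj F).toMonoidHom E.range := by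
    apply Subgroup.closure_le _ |>.2
    rintro x ⟨j, hj, rfl⟩
    exact ⟨E (Equiv.swap 0 j), ⟨Equiv.swap 0 j, rfl⟩, by
      simp only [MulEquiv.toMonoidHom_eq_coe, MonoidHom.coe_coe, MulAut.conj_apply]
      rw [key j hj]⟩
  obtain ⟨x, ⟨σ, rfl⟩, hx⟩ := hsub hg
  simp only [MulEquiv.toMonoidHom_eq_coe, MonoidHom.coe_coe, MulAut.conj_apply] at hx
  have hσ : σ = 1 := by
    apply Equiv.ext
    intro i
    have a : A := Classical.arbitrary A
    have h1 : g (i, a) = (σ i, c (σ i) ((c i).symm a)) := by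
      rw [← hx]
      simp only [Equiv.Perm.mul_apply]
      rw [hFsymm, hEapp, hFapp]
    have := hfix i a
    rw [h1] at this
    simpa using this
  rw [← hx, hσ]
  simp
end

section
/- Suppose C has full support. If σ is a permutation of Ω satisfying σ * H_C * σ⁻¹ = H_C (as sets, i.e., σ normalizes the subgroup H_C), then there exist a permutation π of Fin k, a : Fin k → (ZMod p)ˣ and b : Fin k → ZMod p such that σ = σ_{a,b,π}. -/
def gperm {p k : ℕ} (v : Fin k → ZMod p) : Equiv.Perm (Fin k × ZMod p) :=
  Equiv.prodShear (Equiv.refl (Fin k)) (fun i => Equiv.addRight (v i))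

def Hsub {p k : ℕ} (C : Submodule (ZMod p) (Fin k → ZMod p)) :
    Subgroup (Equiv.Perm (Fin k × ZMod p)) where
  carrier := {g | ∃ v ∈ C, g = gperm v}
  one_mem' := ⟨0, C.zero_mem, by ext ⟨i, x⟩ <;> simp [gperm]⟩
  mul_mem' := by
    rintro g h ⟨v, hv, rfl⟩ ⟨w, hw, rfl⟩
    refine ⟨v + w, C.add_mem hv hw, ?_⟩
    ext ⟨i, x⟩ <;> simp [gperm] <;> ring
  inv_mem' := by
    rintro g ⟨v, hv, rfl⟩
    refine ⟨-v, C.neg_mem hv, ?_⟩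
    have h1 : gperm v * gperm (-v) = 1 := by ext ⟨i, x⟩ <;> simp [gperm]
    exact inv_eq_of_mul_eq_one_right h1

def affineEquiv {p : ℕ} (a : (ZMod p)ˣ) (b : ZMod p) : Equiv.Perm (ZMod p) where
  toFun x := (a : ZMod p) * x + b
  invFun y := ((a⁻¹ : (ZMod p)ˣ) : ZMod p) * (y - b)
  left_inv x := by simp
  right_inv y := by simp

def sigmaPerm {p k : ℕ} (a : Fin k → (ZMod p)ˣ) (b : Fin k → ZMod p)
    (π : Equiv.Perm (Fin k)) : Equiv.Perm (Fin k × ZMod p) :=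
  Equiv.prodShear π (fun i => affineEquiv (a i) (b i))

/-- If `C` has full support and `σ` normalizes `H_C`, then `σ = σ_{a,b,π}` for some
`π`, `a`, `b`. -/
theorem stmt2 {p k : ℕ} (hp : p.Prime)
    (C : Submodule (ZMod p) (Fin k → ZMod p))
    (hfull : ∀ i : Fin k, ∃ v ∈ C, v i ≠ 0)
    (σ : Equiv.Perm (Fin k × ZMod p))
    (hσ : (fun g => σ * g * σ⁻¹) '' (Hsub C : Set (Equiv.Perm (Fin k × ZMod p)))
        = (Hsub C : Set (Equiv.Perm (Fin k × ZMod p)))) :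
    ∃ (π : Equiv.Perm (Fin k)) (a : Fin k → (ZMod p)ˣ) (b : Fin k → ZMod p),
      σ = sigmaPerm a b π := by
  haveI := Fact.mk hp
  -- conjugation relation
  have key : ∀ v ∈ C, ∃ w ∈ C, ∀ z : Fin k × ZMod p,
      σ (z.1, z.2 + v z.1) = ((σ z).1, (σ z).2 + w (σ z).1) := by
    intro v hv
    have hmem : σ * gperm v * σ⁻¹ ∈ (Hsub C : Set (Equiv.Perm (Fin k × ZMod p))) := by
      rw [← hσ]; exact ⟨gperm v, ⟨v, hv, rfl⟩, rfl⟩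
    obtain ⟨w, hw, hEq⟩ := hmem
    refine ⟨w, hw, fun z => ?_⟩
    have h2 : σ * gperm v = gperm w * σ := by
      rw [← hEq]; group
    have := congrArg (fun g => g z) h2
    simpa [gperm, Equiv.prodShear] using this
  have iter : ∀ v ∈ C, ∃ w ∈ C, ∀ (n : ℕ) (i : Fin k) (x : ZMod p),
      σ (i, x + n • v i) = ((σ (i, x)).1, (σ (i, x)).2 + n • w (σ (i, x)).1) := by
    intro v hv
    obtain ⟨w, hw, h⟩ := key v hv
    refine ⟨w, hw, fun n => ?_⟩
    induction n with
    | zero => intro i x; simp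
    | succ n ih =>
      intro i x
      have h1 := h (i, x)
      have h2 := ih i (x + v i)
      have hx : x + (n + 1) • v i = (x + v i) + n • v i := by
        rw [succ_nsmul]; ring
      rw [hx, h2, h1, succ_nsmul]
      congr 1
      ring
  -- main per-index affine form
  have main : ∀ i : Fin k, ∃ (a : (ZMod p)ˣ) (bb : ZMod p), ∀ x : ZMod p,
      σ (i, x) = ((σ (i, 0)).1, (a : ZMod p) * x + bb) := by
    intro i
    obtain ⟨v, hv, hvi⟩ := hfull i
    obtain ⟨w, hw, h⟩ := iter v hv
    set t := v i with ht
    set c := w (σ (i, 0)).1 with hc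
    have hform : ∀ n : ℕ, σ (i, n • t) = ((σ (i, 0)).1, (σ (i, 0)).2 + n • c) := by
      intro n
      have := h n i 0
      simpa using this
    have hc0 : c ≠ 0 := by
      intro hc0
      have h1 := hform 1
      simp [hc0] at h1
      exact hvi h1
    have ha : t⁻¹ * c ≠ 0 := by
      simp [mul_eq_zero, hc0, inv_eq_zero, hvi]
    refine ⟨(Ne.isUnit ha).unit, (σ (i, 0)).2, fun x => ?_⟩
    have hx : x = ((x * t⁻¹).val : ℕ) • t := by
      rw [nsmul_eq_mul, ZMod.natCast_val, ZMod.cast_id]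
      field_simp
    rw [IsUnit.unit_spec]
    calc σ (i, x) = σ (i, ((x * t⁻¹).val : ℕ) • t) := by rw [← hx]
      _ = ((σ (i, 0)).1, (σ (i, 0)).2 + ((x * t⁻¹).val : ℕ) • c) := hform _
      _ = ((σ (i, 0)).1, t⁻¹ * c * x + (σ (i, 0)).2) := by
          have : (((x * t⁻¹).val : ℕ) : ZMod p) = x * t⁻¹ := by
            rw [ZMod.natCast_val, ZMod.cast_id]
          rw [nsmul_eq_mul, this]
          congr 1
          ring
  choose a b hab using main
  have hinj : Function.Injective (fun i : Fin k => (σ (i, 0)).1) := by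
    intro i j hij
    simp only at hij
    have hy : σ (i, 0) = σ (j, ((a j)⁻¹ : (ZMod p)ˣ) * ((a i : ZMod p) * 0 + b i - b j)) := by
      rw [hab i 0, hab j _, hij]
      congr 1
      rw [Units.mul_inv_cancel_left]
      ring
    exact congrArg Prod.fst (σ.injective hy)
  refine ⟨Equiv.ofBijective _ (Finite.injective_iff_bijective.mp hinj), a, b, ?_⟩
  ext ⟨i, x⟩
  all_goals rw [hab i x]
  all_goals rfl
end

section
/- Let C be a ZMod p-submodule of (Fin k → ZMod p), let a : Fin k → (ZMod p)ˣ, b : Fin k → ZMod p and let π be a permutation of Fin k. Then σ_{a,b,π} normalizes the subgroup H_C (i.e., σ_{a,b,π} * H_C * σ_{a,b,π}⁻¹ = H_C) if and only if for every v ∈ C, the vector v' defined by v' (π i) = a i * v i for all i belongs to C. -/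
lemma gperm_inj {p k : ℕ} {v w : Fin k → ZMod p} (h : gperm v = gperm w) : v = w := by
  funext i
  have := congrArg (fun g => (g (i, 0)).2) h
  simpa [gperm] using this

lemma conj_gperm {p k : ℕ} (a : Fin k → (ZMod p)ˣ) (b : Fin k → ZMod p)
    (π : Equiv.Perm (Fin k)) (v : Fin k → ZMod p) :
    sigmaPerm a b π * gperm v * (sigmaPerm a b π)⁻¹
      = gperm (fun j => (a (π.symm j) : ZMod p) * v (π.symm j)) := by
  rw [mul_inv_eq_iff_eq_mul]
  ext ⟨i, x⟩ <;>
    simp [sigmaPerm, gperm, affineEquiv, Equiv.prodShear, mul_add] <;> ring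

/-- `σ_{a,b,π}` normalizes `H_C` iff for every `v ∈ C`, the vector `v'` defined by
`v' (π i) = a i * v i` belongs to `C`. -/
theorem stmt4 {p k : ℕ} (hp : p.Prime)
    (C : Submodule (ZMod p) (Fin k → ZMod p))
    (a : Fin k → (ZMod p)ˣ) (b : Fin k → ZMod p) (π : Equiv.Perm (Fin k)) :
    (fun g => sigmaPerm a b π * g * (sigmaPerm a b π)⁻¹) ''
        (Hsub C : Set (Equiv.Perm (Fin k × ZMod p)))
      = (Hsub C : Set (Equiv.Perm (Fin k × ZMod p)))
    ↔ ∀ v ∈ C, ∀ v' : Fin k → ZMod p,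
        (∀ i : Fin k, v' (π i) = (a i : ZMod p) * v i) → v' ∈ C := by
  haveI : Fact p.Prime := ⟨hp⟩
  set f : (Fin k → ZMod p) → (Fin k → ZMod p) :=
    fun v j => (a (π.symm j) : ZMod p) * v (π.symm j) with hf
  have hfi : Function.Injective f := by
    intro v w h
    funext i
    have := congrFun h (π i)
    simp only [hf, Equiv.symm_apply_apply] at this
    exact mul_left_cancel₀ (a i).ne_zero this
  constructor
  · intro hEq v hv v' hv'
    have hv'f : v' = f v := by
      funext j
      have := hv' (π.symm j)
      simpa [hf] using this
    have : sigmaPerm a b π * gperm v * (sigmaPerm a b π)⁻¹ ∈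
        (Hsub C : Set (Equiv.Perm (Fin k × ZMod p))) := by
      rw [← hEq]
      exact ⟨gperm v, ⟨v, hv, rfl⟩, rfl⟩
    obtain ⟨w, hw, hgw⟩ := this
    rw [conj_gperm] at hgw
    have hfw : f v = w := gperm_inj hgw
    rw [hv'f, hfw]; exact hw
  · intro h
    have hsub : f '' (C : Set (Fin k → ZMod p)) ⊆ C := by
      rintro _ ⟨v, hv, rfl⟩
      refine h v hv _ (fun i => ?_)
      simp [hf]
    have hCfin : (C : Set (Fin k → ZMod p)).Finite := Set.toFinite _
    have himg : f '' (C : Set (Fin k → ZMod p)) = C := by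
      apply Set.eq_of_subset_of_ncard_le hsub _ hCfin
      rw [Set.ncard_image_of_injective _ hfi]
    ext g
    constructor
    · rintro ⟨_, ⟨v, hv, rfl⟩, rfl⟩
      refine ⟨f v, ?_, conj_gperm a b π v⟩
      exact hsub ⟨v, hv, rfl⟩
    · rintro ⟨w, hw, rfl⟩
      have : w ∈ f '' (C : Set (Fin k → ZMod p)) := himg.symm ▸ hw
      obtain ⟨v, hv, rfl⟩ := this
      refine ⟨gperm v, ⟨v, hv, rfl⟩, ?_⟩
      simpa using conj_gperm a b π v
end

section
/- Let F be a field, k : ℕ, and let C be an F-subspace of (Fin k → F). Let d : Fin k → Fˣ and let π be a permutation of Fin k, and let T_{d,π} : (Fin k → F) → (Fin k → F) be the linear map sending v to the vector v' with v' (π i) = d i * v i for all i. If T_{d,π} maps C onto C, then the map T_{d⁻¹,π}, where d⁻¹ i := (d i)⁻¹, maps C^⊥ onto C^⊥, where C^⊥ := {u : Fin k → F | ∀ v ∈ C, ∑ i, u i * v i = 0}. -/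
/-- If the monomial linear map `T_{d,π}` maps the code `C` onto itself, then `T_{d⁻¹,π}`
maps the dual code `C^⊥` onto itself. -/
theorem stmt5 {F : Type*} [Field F] {k : ℕ}
    (C : Submodule F (Fin k → F)) (d : Fin k → Fˣ) (π : Equiv.Perm (Fin k))
    (T T' : (Fin k → F) →ₗ[F] (Fin k → F))
    (hT : ∀ (v : Fin k → F) (i : Fin k), T v (π i) = (d i : F) * v i)
    (hT' : ∀ (u : Fin k → F) (i : Fin k), T' u (π i) = (((d i)⁻¹ : Fˣ) : F) * u i)
    (h : ⇑T '' (C : Set (Fin k → F)) = (C : Set (Fin k → F))) :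
    ⇑T' '' {u : Fin k → F | ∀ v ∈ C, ∑ i : Fin k, u i * v i = 0}
      = {u : Fin k → F | ∀ v ∈ C, ∑ i : Fin k, u i * v i = 0} := by
  have key : ∀ u v : Fin k → F, (∑ i : Fin k, T' u i * T v i) = ∑ i : Fin k, u i * v i := by
    intro u v
    rw [← Equiv.sum_comp π (fun i => T' u i * T v i)]
    refine Finset.sum_congr rfl fun i _ => ?_
    rw [hT, hT']
    field_simp
    linear_combination (u i * v i) * Units.inv_mul (d i)
  ext u
  constructor
  · rintro ⟨w, hw, rfl⟩ v hv
    have : v ∈ ⇑T '' (C : Set (Fin k → F)) := by rw [h]; exact hv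
    obtain ⟨x, hx, rfl⟩ := this
    rw [key]
    exact hw x hx
  · intro hu
    refine ⟨fun i => d i * u (π i), ?_, ?_⟩
    · intro v hv
      have hTv : T v ∈ C := by
        have : T v ∈ (C : Set (Fin k → F)) := by
          rw [← h]; exact Set.mem_image_of_mem _ hv
        exact this
      have := hu (T v) hTv
      rw [← Equiv.sum_comp π (fun i => u i * T v i)] at this
      rw [← this]
      refine Finset.sum_congr rfl fun i _ => ?_
      rw [hT]
      ring
    · funext j
      have : j = π (π.symm j) := (π.apply_symm_apply j).symm
      rw [this, hT']
      field_simp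
      rw [Units.inv_mul, one_mul]
end

section
/- Let C be a ZMod p-submodule of (Fin k → ZMod p) of dimension s, let π be a permutation of Fin k, and let C' := {v ∘ π | v ∈ C}. Let M : Fin s → (Fin k → ZMod p) and M' : Fin s → (Fin k → ZMod p) be families whose members form bases of C and C' respectively. Then the following are equivalent: (1) there exist a : Fin k → (ZMod p)ˣ and b : Fin k → ZMod p such that σ_{a,b,π} normalizes H_C (i.e., σ_{a,b,π} * H_C * σ_{a,b,π}⁻¹ = H_C); (2) there exist an invertible s × s matrix R over ZMod p and d : Fin k → (ZMod p)ˣ such that M' i j = (∑ l, (R⁻¹) i l * M l j) * d j for all i : Fin s and j : Fin k. -/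
lemma gperm_injective {p k : ℕ} : Function.Injective (gperm (p := p) (k := k)) := by
  intro v w h
  funext j
  have := congrArg (fun g => (g (j, 0)).2) h
  simpa [gperm] using this

lemma sigma_mul_gperm {p k : ℕ} (a : Fin k → (ZMod p)ˣ) (b : Fin k → ZMod p)
    (π : Equiv.Perm (Fin k)) (v : Fin k → ZMod p) :
    sigmaPerm a b π * gperm v =
      gperm (fun j => (a (π.symm j) : ZMod p) * v (π.symm j)) * sigmaPerm a b π := by
  ext ⟨i, x⟩
  · simp [sigmaPerm, gperm, affineEquiv]
  · simp [sigmaPerm, gperm, affineEquiv]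
    ring

def scaleEquiv {p k : ℕ} (a : Fin k → (ZMod p)ˣ) :
    (Fin k → ZMod p) ≃ₗ[ZMod p] (Fin k → ZMod p) where
  toFun v := fun j => v j * (a j : ZMod p)
  invFun w := fun j => w j * ((a j)⁻¹ : (ZMod p)ˣ)
  map_add' v w := by funext j; simp [add_mul]
  map_smul' c v := by funext j; simp [mul_assoc]
  left_inv v := by funext j; simp [mul_assoc]
  right_inv w := by funext j; simp [mul_assoc]

@[simp] lemma scaleEquiv_apply {p k : ℕ} (a : Fin k → (ZMod p)ˣ) (v : Fin k → ZMod p) (j : Fin k) :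
    scaleEquiv a v j = v j * (a j : ZMod p) := rfl

lemma exists_unit_matrix {K V : Type*} [Field K] [AddCommGroup V] [Module K V]
    {s : ℕ} {N M' : Fin s → V} (hN : LinearIndependent K N) (hM' : LinearIndependent K M')
    (hsp : Submodule.span K (Set.range M') = Submodule.span K (Set.range N)) :
    ∃ S : Matrix (Fin s) (Fin s) K, IsUnit S ∧ ∀ i, M' i = ∑ l, S i l • N l := by
  classical
  let B : Module.Basis (Fin s) K (Submodule.span K (Set.range N)) := Module.Basis.span hN
  let B' : Module.Basis (Fin s) K (Submodule.span K (Set.range N)) :=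
    (Module.Basis.span hM').map (LinearEquiv.ofEq _ _ hsp)
  refine ⟨(B.toMatrix B').transpose, ?_, ?_⟩
  · have : Invertible (B.toMatrix B') := B.invertibleToMatrix B'
    rw [Matrix.isUnit_iff_isUnit_det, Matrix.det_transpose, ← Matrix.isUnit_iff_isUnit_det]
    exact isUnit_of_invertible _
  · intro i
    have h1 : ((B' i : Submodule.span K (Set.range N)) : V) = M' i := by
      simp [B', Module.Basis.span_apply]
    have h2 : ∀ l, ((B l : Submodule.span K (Set.range N)) : V) = N l := fun l =>
      congrArg Subtype.val (Module.Basis.span_apply hN l)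
    have h3 := B.sum_repr (B' i)
    have h4 := congrArg (Subtype.val) h3
    rw [h1] at h4
    rw [← h4]
    push_cast
    refine Finset.sum_congr rfl fun l _ => ?_
    rw [Matrix.transpose_apply, Module.Basis.toMatrix_apply, h2]


/-- For a code `C` of dimension `s` with bases `M` of `C` and `M'` of `C' = {v ∘ π | v ∈ C}`:
some `σ_{a,b,π}` normalizes `H_C` iff `M' = R⁻¹ M d` for an invertible `s × s` matrix `R`
and diagonal scaling `d`. -/
theorem stmt6 {p k s : ℕ} (hp : p.Prime)
    (C C' : Submodule (ZMod p) (Fin k → ZMod p))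
    (hdim : Module.finrank (ZMod p) C = s)
    (π : Equiv.Perm (Fin k))
    (hC' : ∀ w : Fin k → ZMod p, w ∈ C' ↔ ∃ v ∈ C, w = v ∘ π)
    (M M' : Fin s → (Fin k → ZMod p))
    (hMli : LinearIndependent (ZMod p) M)
    (hMsp : Submodule.span (ZMod p) (Set.range M) = C)
    (hM'li : LinearIndependent (ZMod p) M')
    (hM'sp : Submodule.span (ZMod p) (Set.range M') = C') :
    (∃ (a : Fin k → (ZMod p)ˣ) (b : Fin k → ZMod p),
        (fun g => sigmaPerm a b π * g * (sigmaPerm a b π)⁻¹) ''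
            (Hsub C : Set (Equiv.Perm (Fin k × ZMod p)))
          = (Hsub C : Set (Equiv.Perm (Fin k × ZMod p))))
    ↔ ∃ R : Matrix (Fin s) (Fin s) (ZMod p), IsUnit R ∧
        ∃ d : Fin k → (ZMod p)ˣ,
          ∀ (i : Fin s) (j : Fin k),
            M' i j = (∑ l : Fin s, R⁻¹ i l * M l j) * (d j : ZMod p) := by
  classical
  haveI : Fact p.Prime := ⟨hp⟩
  have memH : ∀ (g : Equiv.Perm (Fin k × ZMod p)),
      g ∈ (Hsub C : Set (Equiv.Perm (Fin k × ZMod p))) ↔ ∃ v ∈ C, g = gperm v := fun g => Iff.rfl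
  constructor
  · rintro ⟨a, b, hab⟩
    -- ψ maps C into C
    have hψ1 : ∀ v ∈ C, (fun j => (a (π.symm j) : ZMod p) * v (π.symm j)) ∈ C := by
      intro v hv
      have hg : sigmaPerm a b π * gperm v * (sigmaPerm a b π)⁻¹
          ∈ (Hsub C : Set (Equiv.Perm (Fin k × ZMod p))) := by
        rw [← hab]; exact ⟨gperm v, ⟨v, hv, rfl⟩, rfl⟩
      obtain ⟨u, hu, hgu⟩ := (memH _).mp hg
      rw [conj_gperm] at hgu
      rw [gperm_injective hgu]
      exact hu
    -- ψ maps C onto C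
    have hψ2 : ∀ w ∈ C, ∃ v ∈ C,
        (fun j => (a (π.symm j) : ZMod p) * v (π.symm j)) = w := by
      intro w hw
      have hg : gperm w ∈ (fun g => sigmaPerm a b π * g * (sigmaPerm a b π)⁻¹) ''
          (Hsub C : Set (Equiv.Perm (Fin k × ZMod p))) := by
        rw [hab]; exact ⟨w, hw, rfl⟩
      obtain ⟨g', hg', hgeq⟩ := hg
      obtain ⟨v, hv, rfl⟩ := (memH _).mp hg'
      have hgeq' : sigmaPerm a b π * gperm v * (sigmaPerm a b π)⁻¹ = gperm w := hgeq
      rw [conj_gperm] at hgeq'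
      exact ⟨v, hv, gperm_injective hgeq'⟩
    -- C' = C · a
    have hCa : ∀ w, w ∈ C' ↔ ∃ v ∈ C, w = scaleEquiv a v := by
      intro w
      rw [hC' w]
      constructor
      · rintro ⟨uu, huu, rfl⟩
        obtain ⟨v, hv, hveq⟩ := hψ2 uu huu
        refine ⟨v, hv, ?_⟩
        funext j
        have h2 := congrFun hveq (π j)
        simp only [Equiv.symm_apply_apply] at h2
        simp only [Function.comp_apply, scaleEquiv_apply]
        rw [← h2]; ring
      · rintro ⟨v, hv, rfl⟩
        refine ⟨fun j => (a (π.symm j) : ZMod p) * v (π.symm j), hψ1 v hv, ?_⟩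
        funext j
        simp only [Function.comp_apply, scaleEquiv_apply, Equiv.symm_apply_apply]
        ring
    set N : Fin s → (Fin k → ZMod p) := ⇑(scaleEquiv a) ∘ M with hNdef
    have hNli : LinearIndependent (ZMod p) N :=
      hMli.map' (scaleEquiv a).toLinearMap (LinearEquiv.ker _)
    have hNsp : Submodule.span (ZMod p) (Set.range N) = C' := by
      have h0 : Set.range N = ⇑((scaleEquiv a).toLinearMap) '' Set.range M := by
        rw [hNdef, Set.range_comp]; rfl
      rw [h0, ← Submodule.map_span, hMsp]
      ext w
      rw [hCa w]
      simp only [Submodule.mem_map, LinearEquiv.coe_coe]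
      constructor
      · rintro ⟨v, hv, rfl⟩; exact ⟨v, hv, rfl⟩
      · rintro ⟨v, hv, rfl⟩; exact ⟨v, hv, rfl⟩
    obtain ⟨S, hS, hSM⟩ := exists_unit_matrix hNli hM'li (hM'sp.trans hNsp.symm)
    have hSdet : IsUnit S.det := (Matrix.isUnit_iff_isUnit_det S).mp hS
    refine ⟨S⁻¹, Matrix.isUnit_nonsing_inv_iff.mpr hS, a, ?_⟩
    intro i j
    rw [Matrix.nonsing_inv_nonsing_inv S hSdet]
    have hij := congrFun (hSM i) j
    rw [hij]
    simp only [Finset.sum_apply, Pi.smul_apply, smul_eq_mul, hNdef, Function.comp_apply,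
      scaleEquiv_apply]
    rw [Finset.sum_mul]
    exact Finset.sum_congr rfl fun l _ => by ring
  · rintro ⟨R, hR, d, hMd⟩
    have hdet : IsUnit R.det := (Matrix.isUnit_iff_isUnit_det R).mp hR
    set u : Fin s → (Fin k → ZMod p) := fun i j => ∑ l, R⁻¹ i l * M l j with hudef
    have hu : ∀ i, u i ∈ C := by
      intro i
      have h1 : u i = ∑ l, R⁻¹ i l • M l := by
        funext j; simp [hudef, Finset.sum_apply]
      rw [h1, ← hMsp]
      exact Submodule.sum_mem _ fun l _ =>
        Submodule.smul_mem _ _ (Submodule.subset_span ⟨l, rfl⟩)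
    have hMu : ∀ l, M l ∈ Submodule.span (ZMod p) (Set.range u) := by
      intro l
      have hRR : R * R⁻¹ = 1 := Matrix.mul_nonsing_inv R hdet
      have h1 : M l = ∑ i, R l i • u i := by
        funext j
        simp only [Finset.sum_apply, Pi.smul_apply, smul_eq_mul, hudef, Finset.mul_sum]
        rw [Finset.sum_comm]
        have h2 : ∀ m, ∑ i, R l i * (R⁻¹ i m * M m j) = (R * R⁻¹) l m * M m j := by
          intro m
          rw [Matrix.mul_apply, Finset.sum_mul]
          exact Finset.sum_congr rfl fun i _ => by ring
        rw [Finset.sum_congr rfl fun m _ => h2 m]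
        simp [hRR, Matrix.one_apply]
      rw [h1]
      exact Submodule.sum_mem _ fun i _ =>
        Submodule.smul_mem _ _ (Submodule.subset_span ⟨i, rfl⟩)
    have hspanu : Submodule.span (ZMod p) (Set.range u) = C := by
      refine le_antisymm (Submodule.span_le.mpr ?_) ?_
      · rintro _ ⟨i, rfl⟩; exact hu i
      · rw [← hMsp]
        exact Submodule.span_le.mpr (by rintro _ ⟨l, rfl⟩; exact hMu l)
    have hM'T : ∀ i, M' i = scaleEquiv d (u i) := by
      intro i
      funext j
      rw [scaleEquiv_apply]
      exact hMd i j
    have hC'd : ∀ w, w ∈ C' ↔ ∃ v ∈ C, scaleEquiv d v = w := by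
      intro w
      rw [← hM'sp]
      have hr : Set.range M' = ⇑((scaleEquiv d).toLinearMap) '' Set.range u := by
        ext x
        constructor
        · rintro ⟨i, rfl⟩; exact ⟨u i, ⟨i, rfl⟩, (hM'T i).symm⟩
        · rintro ⟨_, ⟨i, rfl⟩, rfl⟩; exact ⟨i, hM'T i⟩
      rw [hr, ← Submodule.map_span, hspanu]
      simp only [Submodule.mem_map, LinearEquiv.coe_coe]
    refine ⟨d, 0, ?_⟩
    ext g
    simp only [Set.mem_image]
    constructor
    · rintro ⟨g', hg', rfl⟩
      obtain ⟨v, hv, rfl⟩ := (memH _).mp hg'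
      have hTv : scaleEquiv d v ∈ C' := (hC'd _).mpr ⟨v, hv, rfl⟩
      obtain ⟨w, hw, hweq⟩ := (hC' _).mp hTv
      refine (memH _).mpr ⟨w, hw, ?_⟩
      show sigmaPerm d 0 π * gperm v * (sigmaPerm d 0 π)⁻¹ = gperm w
      rw [conj_gperm]
      refine congrArg gperm (funext fun j => ?_)
      have h2 := congrFun hweq (π.symm j)
      simp only [Function.comp_apply, Equiv.apply_symm_apply, scaleEquiv_apply] at h2
      rw [← h2]; ring
    · intro hg
      obtain ⟨w, hw, rfl⟩ := (memH _).mp hg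
      have hwπ : (w ∘ π) ∈ C' := (hC' _).mpr ⟨w, hw, rfl⟩
      obtain ⟨v, hv, hveq⟩ := (hC'd _).mp hwπ
      refine ⟨gperm v, (memH _).mpr ⟨v, hv, rfl⟩, ?_⟩
      show sigmaPerm d 0 π * gperm v * (sigmaPerm d 0 π)⁻¹ = gperm w
      rw [conj_gperm]
      refine congrArg gperm (funext fun j => ?_)
      have h2 := congrFun hveq (π.symm j)
      simp only [Function.comp_apply, Equiv.apply_symm_apply, scaleEquiv_apply] at h2
      rw [← h2]; ring
end

section
/- Let F be a field, s k : ℕ with s ≤ k, and let ι : Fin s → Fin k be the natural inclusion (Fin.castLE). Let M : Fin s → (Fin k → F) be a family in standard form, meaning M i (ι j) = 1 if i = j and 0 otherwise, and let C be the span of the M i. Suppose d : Fin k → Fˣ is such that the pointwise multiplication map v ↦ (j ↦ d j * v j) sends C onto C. Then: (a) for every i : Fin s, (j ↦ d j * M i j) = d (ι i) • M i; and (b) if for some t : Fin k and i, i' : Fin s both M i t ≠ 0 and M i' t ≠ 0, then d (ι i) = d (ι i'). Consequently, for any two rows M i and M i' whose supports intersect, there is a single scalar a ∈ Fˣ with (j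 ↦ d j * M i j) = a • M i and (j ↦ d j * M i' j) = a • M i'. -/
/-- If `M` is a standard-form generator matrix of `C` and the diagonal map given by `d`
maps `C` onto itself, then each row of `M` is scaled by `d (ι i)`, rows with intersecting
supports are scaled by the same scalar. -/
theorem stmt7 {F : Type*} [Field F] {s k : ℕ} (hsk : s ≤ k)
    (M : Fin s → (Fin k → F))
    (hstd : ∀ i j : Fin s, M i (Fin.castLE hsk j) = if i = j then 1 else 0)
    (C : Submodule F (Fin k → F)) (hC : C = Submodule.span F (Set.range M))
    (d : Fin k → Fˣ)
    (hd : (fun v : Fin k → F => fun j : Fin k => (d j : F) * v j) '' (C : Set (Fin k → F))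
        = (C : Set (Fin k → F))) :
    (∀ i : Fin s, (fun j : Fin k => (d j : F) * M i j) = (d (Fin.castLE hsk i) : F) • M i)
    ∧ (∀ (t : Fin k) (i i' : Fin s), M i t ≠ 0 → M i' t ≠ 0 →
        d (Fin.castLE hsk i) = d (Fin.castLE hsk i'))
    ∧ (∀ i i' : Fin s, ({j : Fin k | M i j ≠ 0} ∩ {j : Fin k | M i' j ≠ 0}).Nonempty →
        ∃ a : Fˣ, (fun j : Fin k => (d j : F) * M i j) = (a : F) • M i
          ∧ (fun j : Fin k => (d j : F) * M i' j) = (a : F) • M i') := by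
  subst hC
  have key : ∀ v ∈ Submodule.span F (Set.range M),
      v = ∑ j : Fin s, v (Fin.castLE hsk j) • M j := by
    intro v hv
    induction hv using Submodule.span_induction with
    | mem x hx =>
      obtain ⟨l, rfl⟩ := hx
      simp [hstd, ite_smul, Finset.sum_ite_eq]
    | zero => simp
    | add x y hx hy ihx ihy =>
      simp only [Pi.add_apply, add_smul, Finset.sum_add_distrib]
      rw [← ihx, ← ihy]
    | smul a x hx ih =>
      simp only [Pi.smul_apply, smul_eq_mul, ← smul_smul, ← Finset.smul_sum]
      rw [← ih]
  have ha : ∀ i : Fin s,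
      (fun j : Fin k => (d j : F) * M i j) = (d (Fin.castLE hsk i) : F) • M i := by
    intro i
    have hmem : (fun j : Fin k => (d j : F) * M i j) ∈
        Submodule.span F (Set.range M) := by
      rw [← SetLike.mem_coe, ← hd]
      exact Set.mem_image_of_mem _ (Submodule.subset_span ⟨i, rfl⟩)
    have := key _ hmem
    rw [this]
    simp [hstd, mul_ite, ite_smul, Finset.sum_ite_eq]
  have hb : ∀ (t : Fin k) (i i' : Fin s), M i t ≠ 0 → M i' t ≠ 0 →
      d (Fin.castLE hsk i) = d (Fin.castLE hsk i') := by
    have hdt : ∀ (t : Fin k) (i : Fin s), M i t ≠ 0 → d t = d (Fin.castLE hsk i) := by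
      intro t i hti
      have := congrFun (ha i) t
      simp only [Pi.smul_apply, smul_eq_mul] at this
      exact Units.ext (mul_right_cancel₀ hti this)
    intro t i i' h h'
    rw [← hdt t i h, hdt t i' h']
  refine ⟨ha, hb, ?_⟩
  rintro i i' ⟨t, hti, hti'⟩
  exact ⟨d (Fin.castLE hsk i), ha i, by rw [hb t i i' hti hti']; exact ha i'⟩
end

section
/- Let F be a field, k : ℕ, and let C be a nonzero F-subspace of (Fin k → F). Say C is support-decomposable if there exist nonzero subspaces C₁, C₂ of (Fin k → F) with C₁ ⊓ C₂ = ⊥, C₁ ⊔ C₂ = C, and the supports {i | ∃ v ∈ C₁, v i ≠ 0} and {i | ∃ v ∈ C₂, v i ≠ 0} disjoint. Suppose C is not support-decomposable and d : Fin k → Fˣ is such that the pointwise multiplication map v ↦ (i ↦ d i * v i) sends C onto C. Then there exists a ∈ Fˣ such that for every v ∈ C, (i ↦ d i * v i) = a • v. -/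
/-- Vectors vanishing on a given set of coordinates, as a submodule. -/
def suppSub {F : Type*} [Field F] {k : ℕ} (P : Set (Fin k)) : Submodule F (Fin k → F) where
  carrier := {u | ∀ i ∈ P, u i = 0}
  add_mem' := by intro a b ha hb i hi; simp [Pi.add_apply, ha i hi, hb i hi]
  zero_mem' := by intro i _; rfl
  smul_mem' := by intro c a ha i hi; simp [Pi.smul_apply, ha i hi]

@[simp] lemma mem_suppSub {F : Type*} [Field F] {k : ℕ} {P : Set (Fin k)}
    {u : Fin k → F} : u ∈ suppSub P ↔ ∀ i ∈ P, u i = 0 := Iff.rfl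

/-- If a nonzero code `C` is not support-decomposable and the diagonal map given by `d`
maps `C` onto itself, then it acts on `C` as a single scalar. -/
theorem stmt8 {F : Type*} [Field F] {k : ℕ}
    (C : Submodule F (Fin k → F)) (hC : C ≠ ⊥)
    (hindec : ¬ ∃ C₁ C₂ : Submodule F (Fin k → F), C₁ ≠ ⊥ ∧ C₂ ≠ ⊥
        ∧ C₁ ⊓ C₂ = ⊥ ∧ C₁ ⊔ C₂ = C
        ∧ Disjoint {i : Fin k | ∃ v ∈ C₁, v i ≠ 0} {i : Fin k | ∃ v ∈ C₂, v i ≠ 0})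
    (d : Fin k → Fˣ)
    (hd : (fun v : Fin k → F => fun i : Fin k => (d i : F) * v i) '' (C : Set (Fin k → F))
        = (C : Set (Fin k → F))) :
    ∃ a : Fˣ, ∀ v ∈ C, (fun i : Fin k => (d i : F) * v i) = (a : F) • v := by
  classical
  -- the diagonal map preserves C
  have hD : ∀ v ∈ C, (fun i => (d i : F) * v i) ∈ C := by
    intro v hv
    have : (fun i => (d i : F) * v i) ∈
        (fun v : Fin k → F => fun i : Fin k => (d i : F) * v i) '' (C : Set (Fin k → F)) :=
      ⟨v, hv, rfl⟩
    rwa [hd] at this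
  -- products of (D - b) preserve C
  have hprod : ∀ (s : Finset F), ∀ v ∈ C,
      (fun i => (∏ b ∈ s, ((d i : F) - b)) * v i) ∈ C := by
    intro s
    induction s using Finset.induction with
    | empty => intro v hv; simpa using hv
    | @insert b₀ s hb ih =>
      intro v hv
      have hw := ih v hv
      set w : Fin k → F := fun i => (∏ b ∈ s, ((d i : F) - b)) * v i with hwdef
      have heq : (fun i => (∏ b ∈ insert b₀ s, ((d i : F) - b)) * v i)
          = (fun i => (d i : F) * w i) - b₀ • w := by
        funext i
        simp only [Finset.prod_insert hb, Pi.sub_apply, Pi.smul_apply, smul_eq_mul, hwdef]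
        ring
      rw [heq]
      exact C.sub_mem (hD w hw) (C.smul_mem b₀ hw)
  -- pick a nonzero vector
  obtain ⟨v, hv, hvne⟩ : ∃ v ∈ C, v ≠ 0 := by
    by_contra h
    push_neg at h
    exact hC (le_antisymm (fun x hx => h x hx) bot_le)
  obtain ⟨i0, hi0⟩ : ∃ i, v i ≠ 0 := by
    by_contra h
    push_neg at h
    exact hvne (funext h)
  set a : F := (d i0 : F) with ha
  set S : Finset F := Finset.image (fun i => (d i : F)) Finset.univ with hS
  set s : Finset F := S.erase a with hs
  set c : F := ∏ b ∈ s, (a - b) with hc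
  have hcne : c ≠ 0 := by
    rw [hc]
    exact Finset.prod_ne_zero_iff.2 fun b hb => sub_ne_zero.2 (Ne.symm (Finset.ne_of_mem_erase hb))
  -- the key projection
  have hproj : ∀ u ∈ C, (fun i => (∏ b ∈ s, ((d i : F) - b)) * u i) ∈ C := hprod s
  have hdiS : ∀ i, (d i : F) ∈ S := fun i => Finset.mem_image.2 ⟨i, Finset.mem_univ i, rfl⟩
  have hvanish : ∀ i, (d i : F) ≠ a → (∏ b ∈ s, ((d i : F) - b)) = 0 := by
    intro i hi
    exact Finset.prod_eq_zero (Finset.mem_erase.2 ⟨hi, hdiS i⟩) (sub_self _)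
  have hval : ∀ i, (d i : F) = a → (∏ b ∈ s, ((d i : F) - b)) = c := by
    intro i hi; rw [hc]; exact Finset.prod_congr rfl fun b _ => by rw [hi]
  -- define the two pieces
  set C₁ : Submodule F (Fin k → F) := C ⊓ suppSub {i | (d i : F) ≠ a} with hC₁
  set C₂ : Submodule F (Fin k → F) := C ⊓ suppSub {i | (d i : F) = a} with hC₂
  -- decomposition of any u ∈ C
  have hdecomp : ∀ u ∈ C, ∃ u₁ ∈ C₁, ∃ u₂ ∈ C₂, u = u₁ + u₂ := by
    intro u hu
    refine ⟨c⁻¹ • (fun i => (∏ b ∈ s, ((d i : F) - b)) * u i), ?_,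
      u - c⁻¹ • (fun i => (∏ b ∈ s, ((d i : F) - b)) * u i), ?_, by abel⟩
    · refine ⟨C.smul_mem _ (hproj u hu), ?_⟩
      intro i hi
      simp only [Pi.smul_apply, smul_eq_mul, hvanish i hi, zero_mul, mul_zero]
    · refine ⟨C.sub_mem hu (C.smul_mem _ (hproj u hu)), ?_⟩
      intro i hi
      simp only [Pi.sub_apply, Pi.smul_apply, smul_eq_mul, hval i hi]
      field_simp
      simp
  -- C₁ is nonzero: the projection of v is in it and nonzero at i0
  have hwC₁ : (fun i => (∏ b ∈ s, ((d i : F) - b)) * v i) ∈ C₁ := by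
    refine ⟨hproj v hv, fun i hi => ?_⟩
    show (∏ b ∈ s, ((d i : F) - b)) * v i = 0
    rw [hvanish i hi, zero_mul]
  have hC₁ne : C₁ ≠ ⊥ := by
    intro h
    have : (fun i => (∏ b ∈ s, ((d i : F) - b)) * v i) = 0 := by
      rw [h] at hwC₁; exact hwC₁
    have h2 := congrFun this i0
    simp only [Pi.zero_apply] at h2
    rw [hval i0 rfl] at h2
    rcases mul_eq_zero.1 h2 with h3 | h3
    · exact hcne h3
    · exact hi0 h3
  -- suppose C₂ ≠ ⊥ : contradiction with indecomposability
  have hC₂bot : C₂ = ⊥ := by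
    by_contra hC₂ne
    apply hindec
    refine ⟨C₁, C₂, hC₁ne, hC₂ne, ?_, ?_, ?_⟩
    · apply le_antisymm _ bot_le
      rintro u ⟨⟨_, h1⟩, ⟨_, h2⟩⟩
      have : u = 0 := by
        funext i
        by_cases hi : (d i : F) = a
        · exact h2 i hi
        · exact h1 i hi
      simp [this]
    · apply le_antisymm
      · exact sup_le inf_le_left inf_le_left
      · intro u hu
        obtain ⟨u₁, hu₁, u₂, hu₂, rfl⟩ := hdecomp u hu
        exact Submodule.add_mem _ (Submodule.mem_sup_left hu₁) (Submodule.mem_sup_right hu₂)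
    · rw [Set.disjoint_left]
      rintro i ⟨u, ⟨_, hu1⟩, hune⟩ ⟨w, ⟨_, hw1⟩, hwne⟩
      by_cases hi : (d i : F) = a
      · exact hwne (hw1 i hi)
      · exact hune (hu1 i hi)
  -- so every u ∈ C is supported on {i | d i = a}
  have hsupp : ∀ u ∈ C, ∀ i, (d i : F) ≠ a → u i = 0 := by
    intro u hu i hi
    obtain ⟨u₁, hu₁, u₂, hu₂, rfl⟩ := hdecomp u hu
    rw [hC₂bot] at hu₂
    simp only [Submodule.mem_bot] at hu₂
    subst hu₂
    simpa using hu₁.2 i hi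
  refine ⟨d i0, ?_⟩
  intro u hu
  funext i
  by_cases hi : (d i : F) = a
  · simp [Pi.smul_apply, smul_eq_mul, hi, ha]
  · simp [Pi.smul_apply, smul_eq_mul, hsupp u hu i hi]
end

section
/- Let C be a ZMod p-submodule of (Fin k → ZMod p), and let i, j : Fin k be indices such that there exists v ∈ C with v i ≠ 0. Then the following are equivalent: (1) there exists a bijection ψ : ZMod p ≃ ZMod p such that ψ(x + v i) = ψ(x) + v j for all v ∈ C and all x : ZMod p; (2) there exists a unit a ∈ (ZMod p)ˣ such that v j = a * v i for all v ∈ C. -/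
/-- The `i`-th and `j`-th fibers are equivalent `H_C`-orbits iff the `j`-th coordinate of
every codeword is a fixed unit multiple of the `i`-th coordinate. -/
theorem stmt10 {p k : ℕ} (hp : p.Prime)
    (C : Submodule (ZMod p) (Fin k → ZMod p))
    (i j : Fin k) (hi : ∃ v ∈ C, v i ≠ 0) :
    (∃ ψ : ZMod p ≃ ZMod p, ∀ v ∈ C, ∀ x : ZMod p, ψ (x + v i) = ψ x + v j)
      ↔ ∃ a : (ZMod p)ˣ, ∀ v ∈ C, v j = (a : ZMod p) * v i := by
  haveI := Fact.mk hp
  obtain ⟨v₀, hv₀C, hv₀i⟩ := hi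
  constructor
  · rintro ⟨ψ, hψ⟩
    -- v₀ j ≠ 0
    have hv₀j : v₀ j ≠ 0 := by
      intro h0
      have := hψ v₀ hv₀C 0
      rw [h0, add_zero] at this
      exact hv₀i (by simpa using ψ.injective this)
    refine ⟨Units.mk0 (v₀ j * (v₀ i)⁻¹) (by
      exact mul_ne_zero hv₀j (inv_ne_zero hv₀i)), ?_⟩
    intro v hv
    -- key: if w ∈ C and w i = 0 then w j = 0
    have key : ∀ w ∈ C, w i = 0 → w j = 0 := by
      intro w hw hwi
      have := hψ w hw 0
      rw [hwi, add_zero] at this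
      exact (left_eq_add.mp this)
    have hw : (v i • v₀ - v₀ i • v) ∈ C := C.sub_mem (C.smul_mem _ hv₀C) (C.smul_mem _ hv)
    have hwi : (v i • v₀ - v₀ i • v) i = 0 := by
      simp [mul_comm]
    have hwj := key _ hw hwi
    simp only [Pi.sub_apply, Pi.smul_apply, smul_eq_mul, sub_eq_zero] at hwj
    rw [Units.val_mk0, eq_comm, mul_assoc, inv_mul_eq_div, ← mul_div_assoc,
      div_eq_iff hv₀i]
    linear_combination hwj
  · rintro ⟨a, ha⟩
    refine ⟨Equiv.mulLeft₀ (a : ZMod p) a.ne_zero, ?_⟩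
    intro v hv x
    simp [Equiv.mulLeft₀, ha v hv, mul_add]
end

section
/- Let C be a ZMod p-submodule of (Fin k → ZMod p) and let σ be a permutation of Ω with σ * H_C * σ⁻¹ = H_C. Let I and J be finite sets of indices in Fin k such that σ maps the union of the i-th fibers over i ∈ I onto the union of the j-th fibers over j ∈ J. Then the dimension of the image of C under the restriction map (Fin k → ZMod p) → (I → ZMod p), v ↦ v restricted to I, equals the dimension of the image of C under the restriction map to J. -/
lemma gperm_apply {p k : ℕ} (v : Fin k → ZMod p) (i : Fin k) (x : ZMod p) :
    gperm v (i, x) = (i, x + v i) := rfl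

lemma conj_exists {p k : ℕ} {C : Submodule (ZMod p) (Fin k → ZMod p)}
    {σ : Equiv.Perm (Fin k × ZMod p)}
    (hσ : (fun g => σ * g * σ⁻¹) '' (Hsub C : Set (Equiv.Perm (Fin k × ZMod p)))
        = (Hsub C : Set (Equiv.Perm (Fin k × ZMod p))))
    {v : Fin k → ZMod p} (hv : v ∈ C) :
    ∃ w, w ∈ C ∧ σ * gperm v * σ⁻¹ = gperm w := by
  have h1 : σ * gperm v * σ⁻¹ ∈ (Hsub C : Set (Equiv.Perm (Fin k × ZMod p))) := by
    rw [← hσ]; exact ⟨gperm v, ⟨v, hv, rfl⟩, rfl⟩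
  obtain ⟨w, hw, he⟩ := h1
  exact ⟨w, hw, he⟩

lemma hsigma_inv {p k : ℕ} {C : Submodule (ZMod p) (Fin k → ZMod p)}
    {σ : Equiv.Perm (Fin k × ZMod p)}
    (hσ : (fun g => σ * g * σ⁻¹) '' (Hsub C : Set (Equiv.Perm (Fin k × ZMod p)))
        = (Hsub C : Set (Equiv.Perm (Fin k × ZMod p)))) :
    (fun g => σ⁻¹ * g * σ⁻¹⁻¹) '' (Hsub C : Set (Equiv.Perm (Fin k × ZMod p)))
        = (Hsub C : Set (Equiv.Perm (Fin k × ZMod p))) := by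
  ext h
  constructor
  · rintro ⟨g, hg, rfl⟩
    rw [← hσ] at hg
    obtain ⟨g', hg', rfl⟩ := hg
    simpa [mul_assoc] using hg'
  · intro hh
    refine ⟨σ * h * σ⁻¹, ?_, ?_⟩
    · rw [← hσ]; exact ⟨h, hh, rfl⟩
    · simp [mul_assoc]

lemma fix_lemma {p k : ℕ} {σ : Equiv.Perm (Fin k × ZMod p)} {I J : Finset (Fin k)}
    (hIJ : ⇑σ '' {ω : Fin k × ZMod p | ω.1 ∈ I} = {ω : Fin k × ZMod p | ω.1 ∈ J})
    {v w : Fin k → ZMod p} (he : σ * gperm v * σ⁻¹ = gperm w)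
    (hvI : ∀ i ∈ I, v i = 0) : ∀ j ∈ J, w j = 0 := by
  intro j hj
  have he' : σ * gperm v = gperm w * σ := by
    rw [← he]; group
  have hmem : ((j, (0 : ZMod p)) : Fin k × ZMod p) ∈ {ω : Fin k × ZMod p | ω.1 ∈ J} := hj
  rw [← hIJ] at hmem
  obtain ⟨⟨i, y⟩, hi, hxy⟩ := hmem
  have h2 : (σ * gperm v) (i, y) = (gperm w * σ) (i, y) := by rw [he']
  rw [Equiv.Perm.mul_apply, Equiv.Perm.mul_apply, gperm_apply, hvI i hi, add_zero, hxy,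
    gperm_apply, zero_add] at h2
  exact (Prod.mk.injEq _ _ _ _ ▸ h2.symm).2

lemma hIJ_inv {p k : ℕ} {σ : Equiv.Perm (Fin k × ZMod p)} {I J : Finset (Fin k)}
    (hIJ : ⇑σ '' {ω : Fin k × ZMod p | ω.1 ∈ I} = {ω : Fin k × ZMod p | ω.1 ∈ J}) :
    ⇑σ⁻¹ '' {ω : Fin k × ZMod p | ω.1 ∈ J} = {ω : Fin k × ZMod p | ω.1 ∈ I} := by
  rw [← hIJ]
  ext ω
  simp [Set.image_image]

/-- If `σ` normalizes `H_C` and maps the union of the fibers over `I` onto the union of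
the fibers over `J`, then the restrictions of `C` to `I` and to `J` have the same
dimension. -/
theorem stmt11 {p k : ℕ} (hp : p.Prime)
    (C : Submodule (ZMod p) (Fin k → ZMod p))
    (σ : Equiv.Perm (Fin k × ZMod p))
    (hσ : (fun g => σ * g * σ⁻¹) '' (Hsub C : Set (Equiv.Perm (Fin k × ZMod p)))
        = (Hsub C : Set (Equiv.Perm (Fin k × ZMod p))))
    (I J : Finset (Fin k))
    (hIJ : ⇑σ '' {ω : Fin k × ZMod p | ω.1 ∈ I} = {ω : Fin k × ZMod p | ω.1 ∈ J}) :
    Module.finrank (ZMod p)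
        (C.map (LinearMap.funLeft (ZMod p) (ZMod p) (fun i : {x // x ∈ I} => (i : Fin k))))
      = Module.finrank (ZMod p)
        (C.map (LinearMap.funLeft (ZMod p) (ZMod p) (fun j : {x // x ∈ J} => (j : Fin k)))) := by
    classical
  haveI : Fact p.Prime := ⟨hp⟩
  haveI : NeZero p := ⟨hp.ne_zero⟩
  -- the conjugation maps
  set Φ : (Fin k → ZMod p) → (Fin k → ZMod p) := fun v =>
    if h : v ∈ C then Classical.choose (conj_exists hσ h) else 0 with hΦ
  set Ψ : (Fin k → ZMod p) → (Fin k → ZMod p) := fun v =>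
    if h : v ∈ C then Classical.choose (conj_exists (hsigma_inv hσ) h) else 0 with hΨ
  have hΦspec : ∀ v (hv : v ∈ C), Φ v ∈ C ∧ σ * gperm v * σ⁻¹ = gperm (Φ v) := by
    intro v hv
    simp only [hΦ, dif_pos hv]
    exact Classical.choose_spec (conj_exists hσ hv)
  have hΨspec : ∀ v (hv : v ∈ C), Ψ v ∈ C ∧ σ⁻¹ * gperm v * σ⁻¹⁻¹ = gperm (Ψ v) := by
    intro v hv
    simp only [hΨ, dif_pos hv]
    exact Classical.choose_spec (conj_exists (hsigma_inv hσ) hv)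
  have hΨΦ : ∀ v, v ∈ C → Ψ (Φ v) = v := by
    intro v hv
    obtain ⟨h1, h2⟩ := hΦspec v hv
    obtain ⟨h3, h4⟩ := hΨspec (Φ v) h1
    apply gperm_injective
    rw [← h4, ← h2]
    group
  have hΦΨ : ∀ v, v ∈ C → Φ (Ψ v) = v := by
    intro v hv
    obtain ⟨h1, h2⟩ := hΨspec v hv
    obtain ⟨h3, h4⟩ := hΦspec (Ψ v) h1
    apply gperm_injective
    rw [← h4, ← h2]
    group
  -- restriction maps
  set fI : ↥C →ₗ[ZMod p] ({x // x ∈ I} → ZMod p) :=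
    (LinearMap.funLeft (ZMod p) (ZMod p) (fun i : {x // x ∈ I} => (i : Fin k))).comp C.subtype
    with hfI
  set fJ : ↥C →ₗ[ZMod p] ({x // x ∈ J} → ZMod p) :=
    (LinearMap.funLeft (ZMod p) (ZMod p) (fun j : {x // x ∈ J} => (j : Fin k))).comp C.subtype
    with hfJ
  -- bijection between the kernels
  have hker : Nat.card ↥(LinearMap.ker fI) = Nat.card ↥(LinearMap.ker fJ) := by
    have memI : ∀ x : ↥C, x ∈ LinearMap.ker fI ↔ ∀ i ∈ I, (x : Fin k → ZMod p) i = 0 := by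
      intro x
      constructor
      · intro h i hi
        exact congrFun h ⟨i, hi⟩
      · intro h
        funext i
        exact h i i.2
    have memJ : ∀ x : ↥C, x ∈ LinearMap.ker fJ ↔ ∀ j ∈ J, (x : Fin k → ZMod p) j = 0 := by
      intro x
      constructor
      · intro h j hj
        exact congrFun h ⟨j, hj⟩
      · intro h
        funext j
        exact h j j.2
    refine Nat.card_congr ⟨fun x => ⟨⟨Φ x.1.1, (hΦspec x.1.1 x.1.2).1⟩, ?_⟩,
      fun y => ⟨⟨Ψ y.1.1, (hΨspec y.1.1 y.1.2).1⟩, ?_⟩, ?_, ?_⟩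
    · rw [memJ]
      exact fix_lemma hIJ (hΦspec x.1.1 x.1.2).2 ((memI _).mp x.2)
    · rw [memI]
      exact fix_lemma (hIJ_inv hIJ) (hΨspec y.1.1 y.1.2).2 ((memJ _).mp y.2)
    · intro x
      ext1
      ext1
      exact hΨΦ x.1.1 x.1.2
    · intro y
      ext1
      ext1
      exact hΦΨ y.1.1 y.1.2
  -- turn kernel cardinalities into finrank equality
  haveI : Fintype ↥(LinearMap.ker fI) := Fintype.ofFinite _
  haveI : Fintype ↥(LinearMap.ker fJ) := Fintype.ofFinite _
  have hcardI : Fintype.card ↥(LinearMap.ker fI)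
      = p ^ Module.finrank (ZMod p) ↥(LinearMap.ker fI) := by
    have h := Module.card_eq_pow_finrank (K := ZMod p) (V := ↥(LinearMap.ker fI))
    rwa [ZMod.card] at h
  have hcardJ : Fintype.card ↥(LinearMap.ker fJ)
      = p ^ Module.finrank (ZMod p) ↥(LinearMap.ker fJ) := by
    have h := Module.card_eq_pow_finrank (K := ZMod p) (V := ↥(LinearMap.ker fJ))
    rwa [ZMod.card] at h
  have hfr : Module.finrank (ZMod p) ↥(LinearMap.ker fI)
      = Module.finrank (ZMod p) ↥(LinearMap.ker fJ) := by
    have := hker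
    rw [Nat.card_eq_fintype_card, Nat.card_eq_fintype_card, hcardI, hcardJ] at this
    exact Nat.pow_right_injective hp.two_le this
  -- rank nullity
  have hmapI : C.map (LinearMap.funLeft (ZMod p) (ZMod p) (fun i : {x // x ∈ I} => (i : Fin k)))
      = LinearMap.range fI := by
    rw [hfI, LinearMap.range_comp, Submodule.range_subtype]
  have hmapJ : C.map (LinearMap.funLeft (ZMod p) (ZMod p) (fun j : {x // x ∈ J} => (j : Fin k)))
      = LinearMap.range fJ := by
    rw [hfJ, LinearMap.range_comp, Submodule.range_subtype]
  have hrnI := LinearMap.finrank_range_add_finrank_ker fI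
  have hrnJ := LinearMap.finrank_range_add_finrank_ker fJ
  rw [hmapI, hmapJ]
  omega
end

section
/- Let C₁ and C₂ be ZMod p-submodules of (Fin k → ZMod p). If there exists a permutation σ of Ω with σ * H_{C₁} * σ⁻¹ = H_{C₂}, then for every natural number w, the number of vectors v ∈ C₁ of Hamming weight w equals the number of vectors v ∈ C₂ of Hamming weight w. -/
lemma card_fixed {p k : ℕ} [NeZero p] (v : Fin k → ZMod p) :
    Fintype.card {x : Fin k × ZMod p // gperm v x = x}
      = (Finset.univ.filter fun i => v i = 0).card * p := by
  have h1 : ∀ x : Fin k × ZMod p, gperm v x = x ↔ v x.1 = 0 := by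
    rintro ⟨i, x⟩
    simp [gperm_apply, Prod.ext_iff]
  calc Fintype.card {x : Fin k × ZMod p // gperm v x = x}
      = (Finset.univ.filter fun x : Fin k × ZMod p => gperm v x = x).card := by
        rw [Fintype.card_subtype]
    _ = ((Finset.univ.filter fun i => v i = 0) ×ˢ (Finset.univ : Finset (ZMod p))).card := by
        congr 1
        ext ⟨i, x⟩
        simp [h1]
    _ = (Finset.univ.filter fun i => v i = 0).card * p := by
        rw [Finset.card_product, Finset.card_univ, ZMod.card]

lemma weight_conj {p k : ℕ} [NeZero p] (σ : Equiv.Perm (Fin k × ZMod p))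
    (v u : Fin k → ZMod p) (h : σ * gperm v * σ⁻¹ = gperm u) :
    hammingNorm v = hammingNorm u := by
  classical
  have hcard : Fintype.card {x : Fin k × ZMod p // gperm v x = x}
      = Fintype.card {x : Fin k × ZMod p // gperm u x = x} := by
    refine Fintype.card_congr (Equiv.subtypeEquiv σ fun x => ?_)
    have : gperm u (σ x) = σ (gperm v x) := by
      rw [← h]; simp [Equiv.Perm.mul_apply]
    rw [this]
    constructor
    · intro hx; rw [hx]
    · intro hx; exact σ.injective hx
  rw [card_fixed, card_fixed] at hcard
  have hp : 0 < p := Nat.pos_of_ne_zero (NeZero.ne p)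
  have hz := Nat.eq_of_mul_eq_mul_right hp hcard
  have h1 := Finset.card_filter_add_card_filter_not
    (s := Finset.univ) (p := fun i => v i ≠ 0)
  have h2 := Finset.card_filter_add_card_filter_not
    (s := Finset.univ) (p := fun i => u i ≠ 0)
  simp only [not_not] at h1 h2
  unfold hammingNorm
  omega

/-- If `H_{C₁}` and `H_{C₂}` are conjugate in `Equiv.Perm Ω`, then `C₁` and `C₂` have the
same weight enumerator. -/
theorem stmt12 {p k : ℕ} (hp : p.Prime)
    (C₁ C₂ : Submodule (ZMod p) (Fin k → ZMod p))
    (σ : Equiv.Perm (Fin k × ZMod p))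
    (hσ : (fun g => σ * g * σ⁻¹) '' (Hsub C₁ : Set (Equiv.Perm (Fin k × ZMod p)))
        = (Hsub C₂ : Set (Equiv.Perm (Fin k × ZMod p)))) :
    ∀ w : ℕ,
      Set.ncard {v : Fin k → ZMod p | v ∈ C₁ ∧ hammingNorm v = w}
        = Set.ncard {v : Fin k → ZMod p | v ∈ C₂ ∧ hammingNorm v = w} := by
  classical
  haveI : Fact p.Prime := ⟨hp⟩
  intro w
  have key : ∀ v ∈ C₁, ∃ u ∈ C₂, σ * gperm v * σ⁻¹ = gperm u := by
    intro v hv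
    have : σ * gperm v * σ⁻¹ ∈ (Hsub C₂ : Set (Equiv.Perm (Fin k × ZMod p))) := by
      rw [← hσ]; exact ⟨gperm v, ⟨v, hv, rfl⟩, rfl⟩
    obtain ⟨u, hu, he⟩ := this
    exact ⟨u, hu, he⟩
  have key2 : ∀ u ∈ C₂, ∃ v ∈ C₁, σ * gperm v * σ⁻¹ = gperm u := by
    intro u hu
    have : gperm u ∈ ((fun g => σ * g * σ⁻¹) '' (Hsub C₁ : Set (Equiv.Perm (Fin k × ZMod p)))) := by
      rw [hσ]; exact ⟨u, hu, rfl⟩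
    obtain ⟨g, ⟨v, hv, rfl⟩, he⟩ := this
    exact ⟨v, hv, he⟩
  rw [← Nat.card_coe_set_eq, ← Nat.card_coe_set_eq]
  refine Nat.card_congr (Equiv.ofBijective
    (fun x : {v : Fin k → ZMod p | v ∈ C₁ ∧ hammingNorm v = w} =>
      (⟨(key x.1 x.2.1).choose, (key x.1 x.2.1).choose_spec.1, by
        rw [← weight_conj σ x.1 _ (key x.1 x.2.1).choose_spec.2]; exact x.2.2⟩ :
        {v : Fin k → ZMod p | v ∈ C₂ ∧ hammingNorm v = w})) ⟨?_, ?_⟩)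
  · rintro ⟨v, hv, hnv⟩ ⟨v', hv', hnv'⟩ hfe
    have h1 := congrArg Subtype.val hfe
    simp only at h1
    have h2 : σ * gperm v * σ⁻¹ = σ * gperm v' * σ⁻¹ := by
      rw [(key v hv).choose_spec.2, (key v' hv').choose_spec.2, h1]
    have h3 : gperm v = gperm v' := mul_left_cancel (mul_right_cancel h2)
    exact Subtype.ext (gperm_injective h3)
  · rintro ⟨u, hu, hnu⟩
    obtain ⟨v, hv, he⟩ := key2 u hu
    have hnv : hammingNorm v = w := by rw [weight_conj σ v u he, hnu]
    refine ⟨⟨v, hv, hnv⟩, Subtype.ext ?_⟩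
    show (key v hv).choose = u
    have h4 := (key v hv).choose_spec.2
    exact (gperm_injective (he.symm.trans h4)).symm
end

section
/- Let C be a ZMod p-submodule of (Fin k → ZMod p), and let σ be a permutation of Ω with σ * H_C * σ⁻¹ = H_C. Let w₀ be the minimum Hamming weight among the nonzero elements of C. If v ∈ C is nonzero with Hamming weight w₀, then σ * g_v * σ⁻¹ = g_{v'} for some nonzero v' ∈ C whose Hamming weight is also w₀. -/
lemma gperm_support {p k : ℕ} [NeZero p] (v : Fin k → ZMod p) :
    (gperm v).support.card = (hammingNorm v) * p := by
  have : (gperm v).support = (Finset.univ.filter (fun i => v i ≠ 0)) ×ˢ Finset.univ := by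
    ext ⟨i, x⟩
    simp [Equiv.Perm.mem_support, gperm, Prod.ext_iff]
  rw [this, Finset.card_product]
  simp [hammingNorm, ZMod.card]

/-- If `σ` normalizes `H_C` and `v ∈ C` is a nonzero codeword of minimal weight `w₀`, then
`σ * g_v * σ⁻¹ = g_{v'}` for some nonzero `v' ∈ C` of weight `w₀`. -/
theorem stmt13 {p k : ℕ} (hp : p.Prime)
    (C : Submodule (ZMod p) (Fin k → ZMod p))
    (σ : Equiv.Perm (Fin k × ZMod p))
    (hσ : (fun g => σ * g * σ⁻¹) '' (Hsub C : Set (Equiv.Perm (Fin k × ZMod p)))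
        = (Hsub C : Set (Equiv.Perm (Fin k × ZMod p))))
    (w₀ : ℕ) (hw₀ : IsLeast {w : ℕ | ∃ v ∈ C, v ≠ 0 ∧ hammingNorm v = w} w₀)
    (v : Fin k → ZMod p) (hv : v ∈ C) (hv0 : v ≠ 0) (hvw : hammingNorm v = w₀) :
    ∃ v' ∈ C, v' ≠ 0 ∧ hammingNorm v' = w₀ ∧ σ * gperm v * σ⁻¹ = gperm v' := by
  haveI : NeZero p := ⟨hp.ne_zero⟩
  have hmem : σ * gperm v * σ⁻¹ ∈ (Hsub C : Set (Equiv.Perm (Fin k × ZMod p))) := by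
    rw [← hσ]; exact ⟨gperm v, ⟨v, hv, rfl⟩, rfl⟩
  obtain ⟨v', hv', heq⟩ := hmem
  have hv'0 : v' ≠ 0 := by
    rintro rfl
    apply hv0
    have h1 : gperm (0 : Fin k → ZMod p) = 1 := by ext ⟨i, x⟩ <;> simp [gperm]
    have h2 : gperm v = σ⁻¹ * (σ * gperm v * σ⁻¹) * σ := by group
    rw [heq, h1] at h2
    simp at h2
    exact gperm_inj (h2.trans h1.symm)
  refine ⟨v', hv', hv'0, ?_, heq⟩
  have hc : (gperm v').support.card = (gperm v).support.card := by
    rw [← heq, Equiv.Perm.support_conj, Finset.card_map]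

  rw [gperm_support, gperm_support] at hc
  have := Nat.eq_of_mul_eq_mul_right hp.pos hc
  omega
end

section
/- Let s ≤ k, let ι : Fin s → Fin k be the natural inclusion (Fin.castLE), and let M : Fin s → (Fin k → ZMod p) be in standard form, i.e., M i (ι j) = 1 if i = j and 0 otherwise. Let C be the span of the rows M i, and assume C has full support. Let u : Fin k with u not in the range of ι, let f : Fin s → Fin k be injective, and let fu : Fin k with fu not in the range of f. Suppose there exists i : Fin s such that M i fu ≠ 0 and M i (f j) * M j u = 0 for all j : Fin s. Then there is no permutation σ of Ω such that σ * H_C * σ⁻¹ = H_C, σ maps the ι j-th fiber onto the f j-th fiber for every j : Fin s, and σ maps the u-th fiber onto the fu-th fiber. -/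
lemma fiber_key {p k : ℕ} (σ : Equiv.Perm (Fin k × ZMod p)) (w v : Fin k → ZMod p)
    (hconj : σ * gperm w * σ⁻¹ = gperm v) (a b : Fin k)
    (hab : ⇑σ '' {ω : Fin k × ZMod p | ω.1 = a} = {ω : Fin k × ZMod p | ω.1 = b}) :
    w a = 0 ↔ v b = 0 := by
  constructor
  · intro hwa
    have h0 : (σ (a, 0)).1 = b := by
      have : σ (a, 0) ∈ {ω : Fin k × ZMod p | ω.1 = b} := by
        rw [← hab]; exact ⟨(a, 0), rfl, rfl⟩
      exact this
    have h := congrArg (fun g : Equiv.Perm (Fin k × ZMod p) => g (σ (a, 0))) hconj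
    simp [gperm, Equiv.prodShear, hwa] at h
    have h2 := congrArg Prod.snd h.symm
    simp [h0] at h2
    exact h2
  · intro hvb
    have h0 : (b, (0 : ZMod p)) ∈ ⇑σ '' {ω : Fin k × ZMod p | ω.1 = a} := by
      rw [hab]; rfl
    obtain ⟨⟨a', x⟩, ha', hσ⟩ := h0
    cases ha'
    have hinv : σ⁻¹ (b, (0:ZMod p)) = (a', x) := by rw [← hσ]; simp
    have h := congrArg (fun g : Equiv.Perm (Fin k × ZMod p) => g (b, (0:ZMod p))) hconj
    simp only [Equiv.Perm.mul_apply, hinv, gperm, Equiv.prodShear, Equiv.coe_fn_mk,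
      Equiv.refl_apply, Equiv.coe_addRight] at h
    rw [hvb, add_zero, ← hσ] at h
    have h2 := congrArg Prod.snd (σ.injective h)
    simpa using h2

/-- Pruning lemma: under the stated zero-pattern condition on the standard-form generator
matrix `M`, no normalizing permutation maps the `ι j`-th fiber to the `f j`-th fiber for
all `j` and the `u`-th fiber to the `fu`-th fiber. -/
theorem stmt14 {p k s : ℕ} (hp : p.Prime) (hsk : s ≤ k)
    (M : Fin s → (Fin k → ZMod p))
    (hstd : ∀ i j : Fin s, M i (Fin.castLE hsk j) = if i = j then 1 else 0)
    (C : Submodule (ZMod p) (Fin k → ZMod p))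
    (hC : C = Submodule.span (ZMod p) (Set.range M))
    (hfull : ∀ i : Fin k, ∃ v ∈ C, v i ≠ 0)
    (u : Fin k) (hu : u ∉ Set.range (Fin.castLE hsk))
    (f : Fin s → Fin k) (hf : Function.Injective f)
    (fu : Fin k) (hfu : fu ∉ Set.range f)
    (i : Fin s) (hi1 : M i fu ≠ 0) (hi2 : ∀ j : Fin s, M i (f j) * M j u = 0) :
    ¬ ∃ σ : Equiv.Perm (Fin k × ZMod p),
        (fun g => σ * g * σ⁻¹) '' (Hsub C : Set (Equiv.Perm (Fin k × ZMod p)))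
            = (Hsub C : Set (Equiv.Perm (Fin k × ZMod p)))
        ∧ (∀ j : Fin s,
            ⇑σ '' {ω : Fin k × ZMod p | ω.1 = Fin.castLE hsk j}
              = {ω : Fin k × ZMod p | ω.1 = f j})
        ∧ ⇑σ '' {ω : Fin k × ZMod p | ω.1 = u} = {ω : Fin k × ZMod p | ω.1 = fu} := by
  rintro ⟨σ, hnorm, hfib, hufib⟩
  haveI : Fact p.Prime := ⟨hp⟩
  have hMiC : M i ∈ C := hC ▸ Submodule.subset_span ⟨i, rfl⟩
  have hmem : gperm (M i) ∈ (fun g => σ * g * σ⁻¹) '' (Hsub C : Set (Equiv.Perm (Fin k × ZMod p))) := by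
    rw [hnorm]; exact ⟨M i, hMiC, rfl⟩
  obtain ⟨g, hg, hconj⟩ := hmem
  obtain ⟨w, hwC, rfl⟩ := hg
  have hkey : ∀ a b : Fin k,
      ⇑σ '' {ω : Fin k × ZMod p | ω.1 = a} = {ω : Fin k × ZMod p | ω.1 = b} →
      (w a = 0 ↔ M i b = 0) := fun a b hab => fiber_key σ w (M i) hconj a b hab
  -- coordinates of w
  rw [hC, Submodule.mem_span_range_iff_exists_fun] at hwC
  obtain ⟨c, hc⟩ := hwC
  have hcoord : ∀ j : Fin s, w (Fin.castLE hsk j) = c j := by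
    intro j
    rw [← hc]
    simp only [Finset.sum_apply, Pi.smul_apply, smul_eq_mul, hstd]
    simp [Finset.sum_ite_eq', mul_ite]
  have hA : ∀ j : Fin s, c j ≠ 0 → M i (f j) ≠ 0 := by
    intro j hcj hMifj
    exact hcj (by rw [← hcoord j]; exact (hkey _ _ (hfib j)).mpr hMifj)
  have hwu : w u ≠ 0 := fun h => hi1 ((hkey u fu hufib).mp h)
  apply hwu
  rw [← hc]
  simp only [Finset.sum_apply, Pi.smul_apply, smul_eq_mul]
  apply Finset.sum_eq_zero
  intro j _
  by_cases hcj : c j = 0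
  · simp [hcj]
  · have := hi2 j
    rcases mul_eq_zero.mp this with h | h
    · exact absurd h (hA j hcj)
    · simp [h]
end

section
/- Let G be a finite group, H a subgroup of G, q a prime, Q a Sylow q-subgroup of H, and P a subgroup of H such that every element of H can be written as x * y with x ∈ P and y ∈ Q. Suppose that the normalizer N_G(H) is contained in the normalizer N_G(P). Then for every g ∈ G, g ∈ N_G(H) if and only if there exist n ∈ N_G(P) ⊓ N_G(Q) and h ∈ H with g = n * h. -/
open Pointwise

/-- Build a `Sylow` structure on `H` from a subgroup `Q ≤ H` that is a maximal
`q`-subgroup of `H`. -/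
def mkSylowAux {G : Type*} [Group G] (q : ℕ) (H Q : Subgroup G) (hQH : Q ≤ H)
    (hp : IsPGroup q Q)
    (hmax : ∀ R : Subgroup G, R ≤ H → IsPGroup q R → Q ≤ R → R = Q) :
    Sylow q H where
  toSubgroup := Q.subgroupOf H
  isPGroup' := by
    rw [← Subgroup.comap_subtype]
    exact hp.comap_subtype
  is_maximal' := by
    intro R hR hle
    have hR' : IsPGroup q (R.map H.subtype) := hR.map _
    have hQle : Q ≤ R.map H.subtype := by
      have := Subgroup.map_mono (f := H.subtype) hle
      rwa [Subgroup.subgroupOf_map_subtype, inf_eq_left.mpr hQH] at this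
    have := hmax (R.map H.subtype) (Subgroup.map_subtype_le R) hR' hQle
    apply Subgroup.map_injective H.subtype_injective
    rw [this, Subgroup.subgroupOf_map_subtype, inf_eq_left.mpr hQH]

/-- Frattini-type argument: if `H = P Q` with `Q` a Sylow `q`-subgroup of `H` and
`N_G(H) ≤ N_G(P)`, then `N_G(H) = (N_G(P) ⊓ N_G(Q)) H`. -/
theorem stmt15 {G : Type*} [Group G] [Finite G] (q : ℕ) (hq : q.Prime)
    (H P Q : Subgroup G) (hPH : P ≤ H) (hQH : Q ≤ H)
    (hQp : IsPGroup q Q)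
    (hQmax : ∀ R : Subgroup G, R ≤ H → IsPGroup q R → Q ≤ R → R = Q)
    (hPQ : ∀ h ∈ H, ∃ x ∈ P, ∃ y ∈ Q, h = x * y)
    (hN : Subgroup.normalizer (H : Set G) ≤ Subgroup.normalizer (P : Set G)) :
    ∀ g : G, g ∈ Subgroup.normalizer (H : Set G)
      ↔ ∃ n ∈ Subgroup.normalizer (P : Set G) ⊓ Subgroup.normalizer (Q : Set G), ∃ h ∈ H, g = n * h := by
  haveI : Fact q.Prime := ⟨hq⟩
  intro g
  constructor
  · intro hg
    have hgP : g ∈ Subgroup.normalizer (P : Set G) := hN hg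
    -- conjugate of Q by g
    set cg : G ≃* G := MulAut.conj g with hcg
    set Qg : Subgroup G := Q.map cg.toMonoidHom with hQg
    have hmemQg : ∀ y : G, y ∈ Qg ↔ g⁻¹ * y * g ∈ Q := by
      intro y
      rw [hQg, Subgroup.mem_map_equiv]
      simp [hcg, MulAut.conj, mul_assoc]
    have hQgH : Qg ≤ H := by
      intro y hy
      rw [hmemQg] at hy
      have h1 : g * (g⁻¹ * y * g) * g⁻¹ ∈ H :=
        (Subgroup.mem_normalizer_iff.mp hg _).mp (hQH hy)
      have e : y = g * (g⁻¹ * y * g) * g⁻¹ := by group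
      rw [e]; exact h1
    have hQgp : IsPGroup q Qg := hQp.map _
    have hQgmax : ∀ R : Subgroup G, R ≤ H → IsPGroup q R → Qg ≤ R → R = Qg := by
      intro R hRH hRp hle
      have h1 : Q ≤ R.map cg.symm.toMonoidHom := by
        intro a ha
        rw [Subgroup.mem_map_equiv]
        simp only [MulEquiv.symm_symm]
        exact hle (by rw [hQg]; exact Subgroup.mem_map_of_mem _ ha)
      have h2 : R.map cg.symm.toMonoidHom ≤ H := by
        intro y hy
        rw [Subgroup.mem_map_equiv] at hy
        have hyR : g * y * g⁻¹ ∈ R := by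
          simpa [hcg, MulAut.conj, mul_assoc] using hy
        have hgi : g⁻¹ ∈ Subgroup.normalizer (H : Set G) := inv_mem hg
        have h3 : g⁻¹ * (g * y * g⁻¹) * g⁻¹⁻¹ ∈ H :=
          (Subgroup.mem_normalizer_iff.mp hgi _).mp (hRH hyR)
        have e : y = g⁻¹ * (g * y * g⁻¹) * g⁻¹⁻¹ := by group
        rw [e]; exact h3
      have h3 := hQmax _ h2 (hRp.map _) h1
      have h4 : (R.map cg.symm.toMonoidHom).map cg.toMonoidHom = R := by
        ext a
        simp [Subgroup.mem_map_equiv]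
      calc R = (R.map cg.symm.toMonoidHom).map cg.toMonoidHom := h4.symm
        _ = Q.map cg.toMonoidHom := by rw [h3]
        _ = Qg := rfl
    -- two Sylow subgroups of H, conjugate by some x ∈ H
    let S : Sylow q H := mkSylowAux q H Q hQH hQp hQmax
    let Sg : Sylow q H := mkSylowAux q H Qg hQgH hQgp hQgmax
    obtain ⟨x, hx⟩ := MulAction.exists_smul_eq H S Sg
    have hE : MulAut.conj x • (Q.subgroupOf H) = Qg.subgroupOf H :=
      congrArg Sylow.toSubgroup hx
    have hxH : (x : G) ∈ H := x.2
    have hmem : ∀ y : G, y ∈ Qg ↔ (x : G)⁻¹ * y * (x : G) ∈ Q := by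
      intro y
      constructor
      · intro hy
        have hyH : y ∈ H := hQgH hy
        have h1 : (⟨y, hyH⟩ : H) ∈ Qg.subgroupOf H := hy
        rw [← hE, Subgroup.mem_pointwise_smul_iff_inv_smul_mem] at h1
        have h2 : ((x⁻¹ * ⟨y, hyH⟩ * x : H) : G) ∈ Q := h1
        simpa using h2
      · intro hy
        have hyH : y ∈ H := by
          have e : y = (x : G) * ((x : G)⁻¹ * y * (x : G)) * (x : G)⁻¹ := by group
          rw [e]; exact mul_mem (mul_mem hxH (hQH hy)) (inv_mem hxH)
        have h1 : (⟨y, hyH⟩ : H) ∈ Qg.subgroupOf H := by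
          rw [← hE, Subgroup.mem_pointwise_smul_iff_inv_smul_mem]
          show ((x⁻¹ * ⟨y, hyH⟩ * x : H) : G) ∈ Q
          simpa using hy
        exact h1
    -- n := x⁻¹ * g
    have hxN : (x : G) ∈ Subgroup.normalizer (H : Set G) := Subgroup.le_normalizer hxH
    have hnH : (x : G)⁻¹ * g ∈ Subgroup.normalizer (H : Set G) := mul_mem (inv_mem hxN) hg
    have hnP : (x : G)⁻¹ * g ∈ Subgroup.normalizer (P : Set G) := mul_mem (inv_mem (hN hxN)) hgP
    have hnQ : (x : G)⁻¹ * g ∈ Subgroup.normalizer (Q : Set G) := by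
      rw [Subgroup.mem_normalizer_iff]
      intro a
      have key : g * a * g⁻¹ ∈ Qg ↔ a ∈ Q := by
        rw [hmemQg]
        have e : g⁻¹ * (g * a * g⁻¹) * g = a := by group
        rw [e]
      have e2 : (x : G)⁻¹ * g * a * ((x : G)⁻¹ * g)⁻¹
          = (x : G)⁻¹ * (g * a * g⁻¹) * (x : G) := by group
      rw [e2, ← hmem (g * a * g⁻¹), key]
    refine ⟨(x : G)⁻¹ * g, ⟨hnP, hnQ⟩,
      ((x : G)⁻¹ * g)⁻¹ * (x : G) * ((x : G)⁻¹ * g), ?_, by group⟩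
    have h1 : ((x : G)⁻¹ * g)⁻¹ * (x : G) * (((x : G)⁻¹ * g)⁻¹)⁻¹ ∈ H :=
      (Subgroup.mem_normalizer_iff.mp (inv_mem hnH) _).mp hxH
    have e : ((x : G)⁻¹ * g)⁻¹ * (x : G) * ((x : G)⁻¹ * g)
        = ((x : G)⁻¹ * g)⁻¹ * (x : G) * (((x : G)⁻¹ * g)⁻¹)⁻¹ := by group
    rw [e]; exact h1
  · rintro ⟨n, ⟨hnP, hnQ⟩, h, hh, rfl⟩
    have hnH : n ∈ Subgroup.normalizer (H : Set G) := by
      rw [Subgroup.mem_normalizer_iff]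
      intro a
      constructor
      · intro ha
        obtain ⟨u, hu, v, hv, rfl⟩ := hPQ a ha
        have h1 : n * u * n⁻¹ ∈ P := (Subgroup.mem_normalizer_iff.mp hnP u).mp hu
        have h2 : n * v * n⁻¹ ∈ Q := (Subgroup.mem_normalizer_iff.mp hnQ v).mp hv
        have h3 := mul_mem (hPH h1) (hQH h2)
        have e : n * (u * v) * n⁻¹ = (n * u * n⁻¹) * (n * v * n⁻¹) := by group
        rw [e]; exact h3
      · intro ha
        obtain ⟨u, hu, v, hv, huv⟩ := hPQ _ ha
        have h1 : n⁻¹ * u * n⁻¹⁻¹ ∈ P :=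
          (Subgroup.mem_normalizer_iff.mp (inv_mem hnP) u).mp hu
        have h2 : n⁻¹ * v * n⁻¹⁻¹ ∈ Q :=
          (Subgroup.mem_normalizer_iff.mp (inv_mem hnQ) v).mp hv
        have key : a = (n⁻¹ * u * n⁻¹⁻¹) * (n⁻¹ * v * n⁻¹⁻¹) := by
          have e : a = n⁻¹ * (n * a * n⁻¹) * n := by group
          rw [e, huv]; group
        rw [key]
        exact mul_mem (hPH h1) (hQH h2)
    exact mul_mem hnH (Subgroup.le_normalizer hh)
end

section
/- Let p be an odd prime and k : ℕ. Let D := Fin k → DihedralGroup p with the pointwise group structure, and let H be a subgroup of D such that for every i : Fin k the i-th coordinate projection maps H onto DihedralGroup p. Let Rot denote the subgroup of DihedralGroup p consisting of the rotations {DihedralGroup.r a | a : ZMod p}, and let GRot denote the subgroup of D of tuples all of whose coordinates are rotations. Then for every i : Fin k, the image of H ⊓ GRot under the i-th coordinate projection equals Rot. -/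
/-- The subgroup of rotations `{r a | a : ZMod n}` of the dihedral group. -/
def rotSubgroup (n : ℕ) : Subgroup (DihedralGroup n) where
  carrier := {x | ∃ a : ZMod n, x = DihedralGroup.r a}
  one_mem' := ⟨0, DihedralGroup.one_def⟩
  mul_mem' := by
    rintro _ _ ⟨a, rfl⟩ ⟨b, rfl⟩
    exact ⟨a + b, rfl⟩
  inv_mem' := by
    rintro _ ⟨a, rfl⟩
    exact ⟨-a, rfl⟩

lemma sq_mem_rotSubgroup (n : ℕ) (x : DihedralGroup n) : x * x ∈ rotSubgroup n := by
  cases x with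
  | r a => exact ⟨a + a, rfl⟩
  | sr a => exact ⟨a - a, rfl⟩

/-- For a subdirect product `H` of `k` copies of the dihedral group of order `2p`, the
image of `H ⊓ GRot` under each coordinate projection is the full rotation subgroup. -/
theorem stmt16 {p k : ℕ} (hp : p.Prime) (hodd : Odd p)
    (H : Subgroup (Fin k → DihedralGroup p))
    (hsub : ∀ (i : Fin k) (x : DihedralGroup p), ∃ h ∈ H, h i = x) :
    ∀ i : Fin k,
      Subgroup.map (Pi.evalMonoidHom (fun _ : Fin k => DihedralGroup p) i)
          (H ⊓ Subgroup.pi Set.univ (fun _ : Fin k => rotSubgroup p))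
        = rotSubgroup p := by
  haveI := Fact.mk hp
  intro i
  apply le_antisymm
  · rintro x ⟨h, ⟨hH, hpi⟩, rfl⟩
    exact hpi i (Set.mem_univ i)
  · rintro x ⟨a, rfl⟩
    have h2 : (2 : ZMod p) ≠ 0 := by
      intro h
      have hdvd : p ∣ 2 := by
        have := (ZMod.natCast_eq_zero_iff 2 p).mp (by exact_mod_cast h)
        exact this
      have := (Nat.prime_dvd_prime_iff_eq hp Nat.prime_two).mp hdvd
      subst this
      exact (by decide : ¬ Odd 2) hodd
    set b : ZMod p := a / 2 with hb
    obtain ⟨h, hH, hpi⟩ := hsub i (DihedralGroup.r b)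
    refine ⟨h * h, ⟨mul_mem hH hH, fun j _ => sq_mem_rotSubgroup p (h j)⟩, ?_⟩
    show h i * h i = DihedralGroup.r a
    rw [hpi]
    show DihedralGroup.r (b + b) = DihedralGroup.r a
    congr 1
    rw [hb]
    field_simp
    ring
end

section
/- Let p be an odd prime and k : ℕ. Let D := Fin k → DihedralGroup p with the pointwise group structure, and let H be a subgroup of D such that for every i : Fin k the i-th coordinate projection maps H onto DihedralGroup p. Let GRot denote the subgroup of D of tuples all of whose coordinates are rotations (of the form DihedralGroup.r a), and set P := H ⊓ GRot. Then: (a) P is a normal subgroup of H; (b) P is a Sylow p-subgroup of H; and (c) for every Sylow 2-subgroup Q of H, every element h ∈ H can be written as h = x * y with x ∈ P and y ∈ Q. -/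
open scoped Pointwise


private lemma inv_r {n : ℕ} (a : ZMod n) : (DihedralGroup.r a)⁻¹ = DihedralGroup.r (-a) :=
  inv_eq_of_mul_eq_one_right (by rw [DihedralGroup.r_mul_r, add_neg_cancel, DihedralGroup.one_def])

private lemma inv_sr {n : ℕ} (a : ZMod n) : (DihedralGroup.sr a)⁻¹ = DihedralGroup.sr a :=
  inv_eq_of_mul_eq_one_right (DihedralGroup.sr_mul_self a)

/-- The sign of a dihedral group element. -/
private def sgn {n : ℕ} : DihedralGroup n → Multiplicative (ZMod 2)
  | .r _ => 1
  | .sr _ => Multiplicative.ofAdd 1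

private lemma sgn_mul {n : ℕ} (x y : DihedralGroup n) : sgn (x * y) = sgn x * sgn y := by
  rcases x with a | a <;> rcases y with b | b <;>
    simp only [DihedralGroup.r_mul_r, DihedralGroup.r_mul_sr, DihedralGroup.sr_mul_r,
      DihedralGroup.sr_mul_sr, sgn] <;> decide

private lemma sgn_eq_one_iff {n : ℕ} (x : DihedralGroup n) :
    sgn x = 1 ↔ ∃ a : ZMod n, x = DihedralGroup.r a := by
  rcases x with a | a
  · exact ⟨fun _ => ⟨a, rfl⟩, fun _ => rfl⟩
  · constructor
    · intro h
      have h' : (Multiplicative.ofAdd (1 : ZMod 2)) = 1 := h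
      exact absurd h' (by decide)
    · rintro ⟨b, h⟩; cases h

private lemma r_pow_p {p : ℕ} [NeZero p] (a : ZMod p) : (DihedralGroup.r a) ^ p = 1 := by
  have h1 : DihedralGroup.r a = (DihedralGroup.r (1 : ZMod p)) ^ a.val := by
    rw [DihedralGroup.r_one_pow, ZMod.natCast_rightInverse a]
  rw [h1, ← pow_mul, DihedralGroup.r_one_pow]
  have : ((a.val * p : ℕ) : ZMod p) = 0 := by
    push_cast [ZMod.natCast_self]
    ring
  rw [this, ← DihedralGroup.one_def]

/-- For a subdirect product `H` of `k` copies of the dihedral group of order `2p` (`p` an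
odd prime) and `P := H ⊓ GRot`: (a) `P` is normal in `H`; (b) `P` is a Sylow `p`-subgroup
of `H`; (c) for every Sylow `2`-subgroup `Q` of `H`, `H = P Q`. -/
theorem stmt18 {p k : ℕ} (hp : p.Prime) (hodd : Odd p)
    (H : Subgroup (Fin k → DihedralGroup p))
    (hsub : ∀ (i : Fin k) (x : DihedralGroup p), ∃ h ∈ H, h i = x)
    (P : Subgroup (Fin k → DihedralGroup p))
    (hP : P = H ⊓ Subgroup.pi Set.univ (fun _ : Fin k => rotSubgroup p)) :
    (P.subgroupOf H).Normal
    ∧ (IsPGroup p P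
        ∧ ∀ R : Subgroup (Fin k → DihedralGroup p),
            R ≤ H → IsPGroup p R → P ≤ R → R = P)
    ∧ ∀ Q : Subgroup (Fin k → DihedralGroup p), Q ≤ H → IsPGroup 2 Q →
        (∀ R : Subgroup (Fin k → DihedralGroup p),
            R ≤ H → IsPGroup 2 R → Q ≤ R → R = Q) →
        ∀ h ∈ H, ∃ x ∈ P, ∃ y ∈ Q, h = x * y := by
  haveI : NeZero p := ⟨hp.ne_zero⟩
  haveI : Fact p.Prime := ⟨hp⟩
  have hp2 : p ≠ 2 := by
    rintro rfl
    exact (Nat.not_odd_iff_even.mpr even_two) hodd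
  subst hP
  set G := Fin k → DihedralGroup p
  set GRot := Subgroup.pi Set.univ (fun _ : Fin k => rotSubgroup p) with hGRot
  -- GRot is normal in G
  have hnorm : GRot.Normal := by
    constructor
    intro n hn g i _
    obtain ⟨a, ha⟩ := hn i (Set.mem_univ i)
    have : (g * n * g⁻¹) i = g i * n i * (g i)⁻¹ := rfl
    rw [this, ha]
    rcases hgi : g i with b | b
    · exact ⟨a, by rw [inv_r, DihedralGroup.r_mul_r, DihedralGroup.r_mul_r]; congr 1; ring⟩
    · exact ⟨-a, by rw [inv_sr, DihedralGroup.sr_mul_r, DihedralGroup.sr_mul_sr]; congr 1; ring⟩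
  -- (a)
  have ha : ((H ⊓ GRot).subgroupOf H).Normal := by
    rw [Subgroup.inf_subgroupOf_left]
    exact hnorm.subgroupOf H
  -- (b1)
  have hb1 : IsPGroup p (H ⊓ GRot : Subgroup G) := by
    intro g
    refine ⟨1, ?_⟩
    have hg : (g : G) ^ p = 1 := by
      funext i
      obtain ⟨a, hai⟩ := g.2.2 i (Set.mem_univ i)
      have : ((g : G) ^ p) i = ((g : G) i) ^ p := rfl
      rw [this, hai, r_pow_p]
      rfl
    rw [pow_one]
    exact Subtype.ext (by simpa using hg)
  -- (b2)
  have hb2 : ∀ R : Subgroup G, R ≤ H → IsPGroup p R → H ⊓ GRot ≤ R → R = H ⊓ GRot := by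
    intro R hRH hRp hPR
    refine le_antisymm (fun x hx => ⟨hRH hx, ?_⟩) hPR
    intro i _
    obtain ⟨m, hm⟩ := hRp ⟨x, hx⟩
    have hxm : (x i) ^ (p ^ m) = 1 := by
      have : (x : G) ^ (p ^ m) = 1 := by
        simpa [Subtype.ext_iff] using hm
      exact congrFun this i
    rcases hxi : x i with a | a
    · exact ⟨a, rfl⟩
    · exfalso
      rw [hxi] at hxm
      have h2 : (2 : ℕ) ∣ p ^ m := by
        rw [← DihedralGroup.orderOf_sr a]
        exact orderOf_dvd_of_pow_eq_one hxm
      have := Nat.Prime.dvd_of_dvd_pow Nat.prime_two h2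
      rcases (Nat.prime_dvd_prime_iff_eq Nat.prime_two hp).mp this with h
      exact hp2 h.symm
  refine ⟨ha, ⟨hb1, hb2⟩, ?_⟩
  -- (c)
  intro Q hQH hQ2 hQmax h hh
  haveI : Finite G := by infer_instance
  set N : Subgroup H := (H ⊓ GRot).subgroupOf H with hN
  set Q' : Subgroup H := Q.subgroupOf H with hQ'
  have hPH : (H ⊓ GRot : Subgroup G) ≤ H := inf_le_left
  -- N is a p-group, Q' is a 2-group
  have hNp : IsPGroup p N := hb1.comap_subtype
  have hQ'2 : IsPGroup 2 Q' := hQ2.comap_subtype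
  obtain ⟨a, hacard⟩ := IsPGroup.iff_card.mp hNp
  -- the sign homomorphism
  let Φ : H →* (Fin k → Multiplicative (ZMod 2)) :=
    { toFun := fun x i => sgn ((x : G) i)
      map_one' := by funext i; rfl
      map_mul' := by
        intro x y
        funext i
        exact sgn_mul ((x : G) i) ((y : G) i) }
  have hker : Φ.ker = N := by
    ext x
    simp only [MonoidHom.mem_ker, hN, Subgroup.mem_subgroupOf, Subgroup.mem_inf,
      Subgroup.mem_pi, funext_iff]
    constructor
    · intro hx
      exact ⟨x.2, fun i _ => (sgn_eq_one_iff _).mp (hx i)⟩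
    · intro hx i
      exact (sgn_eq_one_iff _).mpr (hx.2 i (Set.mem_univ i))
  -- index of N is a power of 2
  have hdvd : N.index ∣ 2 ^ k := by
    rw [← hker, Subgroup.index_ker Φ]
    have h1 : Nat.card Φ.range ∣ Nat.card (Fin k → Multiplicative (ZMod 2)) :=
      Subgroup.card_subgroup_dvd_card Φ.range
    have h2 : Nat.card (Fin k → Multiplicative (ZMod 2)) = 2 ^ k := by
      rw [Nat.card_pi]
      simp [Nat.card_eq_fintype_card]
    rwa [h2] at h1
  obtain ⟨b, -, hb⟩ := (Nat.dvd_prime_pow Nat.prime_two).mp hdvd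
  have hcardH : Nat.card H = p ^ a * 2 ^ b := by
    rw [← Subgroup.card_mul_index N, hacard, hb]
  -- Q' is a Sylow 2-subgroup of H
  have hQ'max : ∀ {R : Subgroup H}, IsPGroup 2 R → Q' ≤ R → R = Q' := by
    intro R hR hle
    have hmapQ : Q'.map H.subtype = Q := by
      rw [hQ', Subgroup.subgroupOf_map_subtype, inf_of_le_left hQH]
    have h1 : R.map H.subtype = Q := by
      apply hQmax
      · exact Subgroup.map_subtype_le R
      · exact hR.map H.subtype
      · rw [← hmapQ]
        exact Subgroup.map_mono hle
    apply Subgroup.map_injective H.subtype_injective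
    rw [h1, hmapQ]
  let QS : Sylow 2 H := ⟨Q', hQ'2, hQ'max⟩
  haveI : Fact (Nat.Prime 2) := ⟨Nat.prime_two⟩
  have hQcard : Nat.card Q' = 2 ^ ((Nat.card H).factorization 2) :=
    QS.card_eq_multiplicity
  have hfact : (Nat.card H).factorization 2 = b := by
    rw [hcardH, Nat.factorization_mul (pow_ne_zero _ hp.ne_zero) (pow_ne_zero _ two_ne_zero),
      Nat.Prime.factorization_pow hp, Nat.Prime.factorization_pow Nat.prime_two]
    simp [Finsupp.single_apply, hp2]
  rw [hfact] at hQcard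
  -- N and Q' are complementary
  have hdisj : Disjoint N Q' := IsPGroup.disjoint_of_ne p 2 hp2 N Q' hNp hQ'2
  have hcomp : Subgroup.IsComplement' N Q' := by
    apply Subgroup.isComplement'_of_card_mul_and_disjoint _ hdisj
    rw [hacard, hQcard, hcardH]
  have hmul : ((N : Set H) * (Q' : Set H)) = Set.univ := hcomp.mul_eq
  have hmem : (⟨h, hh⟩ : H) ∈ ((N : Set H) * (Q' : Set H)) := by rw [hmul]; trivial
  obtain ⟨x, hx, y, hy, hxy⟩ := Set.mem_mul.mp hmem
  refine ⟨(x : G), hx, (y : G), hy, ?_⟩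
  have := congrArg (Subtype.val) hxy
  exact this.symm
end

section
/- Let p be an odd prime. In the permutation group Equiv.Perm (ZMod p), let t be the translation x ↦ x + 1 and let r be the negation x ↦ -x. Then a permutation σ of ZMod p normalizes both the subgroup generated by t and the subgroup generated by r if and only if there exists a unit u ∈ (ZMod p)ˣ such that σ is the permutation x ↦ u * x. -/
lemma aux_conj_zpow {G : Type*} [Group G] (a b : G) (k : ℤ) :
    (a⁻¹ * b * a) ^ k = a⁻¹ * b ^ k * a := by
  have := conj_zpow (i := k) (a := a⁻¹) (b := b)
  simpa [inv_inv] using this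

/-- For an odd prime `p`, a permutation `σ` of `ZMod p` normalizes both the subgroup
generated by the translation `x ↦ x + 1` and the subgroup generated by the negation
`x ↦ -x` iff `σ` is multiplication by a unit. -/
theorem stmt19 {p : ℕ} (hp : p.Prime) (hodd : Odd p)
    (σ : Equiv.Perm (ZMod p)) :
    (σ ∈ Subgroup.normalizer ((Subgroup.closure {(Equiv.addRight (1 : ZMod p) : Equiv.Perm (ZMod p))} : Subgroup (Equiv.Perm (ZMod p))) : Set (Equiv.Perm (ZMod p)))
      ∧ σ ∈ Subgroup.normalizer ((Subgroup.closure {(Equiv.neg (ZMod p) : Equiv.Perm (ZMod p))} : Subgroup (Equiv.Perm (ZMod p))) : Set (Equiv.Perm (ZMod p))))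
    ↔ ∃ u : (ZMod p)ˣ, ∀ x : ZMod p, σ x = (u : ZMod p) * x := by
  haveI : Fact p.Prime := ⟨hp⟩
  have hpne2 : p ≠ 2 := by rintro rfl; revert hodd; decide
  have h2 : (2 : ZMod p) ≠ 0 := by
    have : ((2 : ℕ) : ZMod p) ≠ 0 := by
      rw [Ne, ZMod.natCast_eq_zero_iff]
      exact fun h => hpne2 ((Nat.prime_dvd_prime_iff_eq hp Nat.prime_two).mp h)
    simpa using this
  set t : Equiv.Perm (ZMod p) := Equiv.addRight (1 : ZMod p) with ht_def
  set r : Equiv.Perm (ZMod p) := Equiv.neg (ZMod p) with hr_def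
  have hr2 : r * r = 1 := by
    ext x; simp [hr_def]
  have hrpow : ∀ n : ℤ, r ^ n = 1 ∨ r ^ n = r := by
    intro n
    rcases Int.even_or_odd n with ⟨k, hk⟩ | ⟨k, hk⟩
    · left; subst hk
      rw [show k + k = 2 * k by ring, zpow_mul]
      rw [show (r : Equiv.Perm (ZMod p)) ^ (2 : ℤ) = r * r by rw [zpow_two], hr2, one_zpow]
    · right; subst hk
      rw [zpow_add, zpow_mul, zpow_one]
      rw [show (r : Equiv.Perm (ZMod p)) ^ (2 : ℤ) = r * r by rw [zpow_two], hr2, one_zpow, one_mul]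
  have haddmem : ∀ a : ZMod p, Equiv.addRight a ∈ Subgroup.closure {t} := by
    intro a
    rw [Subgroup.mem_closure_singleton]
    refine ⟨(a.val : ℤ), ?_⟩
    rw [ht_def, Equiv.zsmul_addRight]
    congr 1
    simp [ZMod.natCast_val, ZMod.cast_id]
  constructor
  · rintro ⟨hT, hR⟩
    rw [Subgroup.mem_normalizer_iff] at hT hR
    obtain ⟨n, hn⟩ := Subgroup.mem_closure_singleton.mp
      ((hT t).mp (Subgroup.subset_closure rfl))
    have hconjr : σ * r * σ⁻¹ = r := by
      obtain ⟨m, hm⟩ := Subgroup.mem_closure_singleton.mp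
        ((hR r).mp (Subgroup.subset_closure rfl))
      rcases hrpow m with h | h
      · exfalso
        rw [h] at hm
        have : r = 1 := by
          have := congrArg (fun g => σ⁻¹ * g * σ) hm
          simpa [mul_assoc] using this.symm
        have := congrArg (fun e : Equiv.Perm (ZMod p) => e 1) this
        simp [hr_def] at this
        exact h2 (by linear_combination -this)
      · rw [h] at hm; exact hm.symm
    set c : ZMod p := ((n : ℤ) : ZMod p) with hc
    have hstep : ∀ x : ZMod p, σ (x + 1) = σ x + c := by
      intro x
      have := congrArg (fun e : Equiv.Perm (ZMod p) => e (σ x)) hn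
      simpa [ht_def, Equiv.zsmul_addRight, Equiv.Perm.mul_apply, zsmul_eq_mul] using this.symm
    have hneg : ∀ x : ZMod p, σ (-x) = -σ x := by
      intro x
      have := congrArg (fun e : Equiv.Perm (ZMod p) => e (σ x)) hconjr
      simpa [hr_def, Equiv.Perm.mul_apply] using this
    have h0 : σ 0 = 0 := by
      have := hneg 0
      rw [neg_zero] at this
      have h20 : (2 : ZMod p) * σ 0 = 0 := by linear_combination this
      rcases mul_eq_zero.mp h20 with h | h
      · exact absurd h h2
      · exact h
    have hnat : ∀ m : ℕ, σ ((m : ZMod p)) = c * m := by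
      intro m
      induction m with
      | zero => simpa using h0
      | succ k ih =>
        push_cast
        rw [hstep, ih]; ring
    have hlin : ∀ x : ZMod p, σ x = c * x := by
      intro x
      have : σ ((x.val : ZMod p)) = c * x.val := hnat x.val
      simpa [ZMod.natCast_val, ZMod.cast_id] using this
    have hcne : c ≠ 0 := by
      intro h
      have h1 : σ 1 = σ 0 := by rw [hlin 1, h0, h, zero_mul]
      have := σ.injective h1
      exact one_ne_zero this
    exact ⟨Units.mk0 c hcne, fun x => by simpa using hlin x⟩
  · rintro ⟨u, hu⟩
    have hinv : ∀ y : ZMod p, σ⁻¹ y = (↑u⁻¹ : ZMod p) * y := by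
      intro y
      apply σ.injective
      rw [Equiv.Perm.coe_inv, Equiv.apply_symm_apply, hu]
      exact (u.mul_inv_cancel_left y).symm
    have hconjt : σ * t * σ⁻¹ = Equiv.addRight (u : ZMod p) := by
      ext x
      simp only [Equiv.Perm.mul_apply, ht_def, Equiv.coe_addRight, hinv, hu]
      rw [mul_add, u.mul_inv_cancel_left, mul_one]
    have hconjt' : σ⁻¹ * t * σ = Equiv.addRight ((↑u⁻¹ : ZMod p)) := by
      ext x
      simp only [Equiv.Perm.mul_apply, ht_def, Equiv.coe_addRight, hinv, hu]
      rw [mul_add, u.inv_mul_cancel_left, mul_one]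
    have hconjr : σ * r * σ⁻¹ = r := by
      ext x
      simp only [Equiv.Perm.mul_apply, hr_def, Equiv.neg_apply, hinv, hu]
      rw [mul_neg, u.mul_inv_cancel_left]
    have hconjr' : σ⁻¹ * r * σ = r := by
      have := congrArg (fun g => σ⁻¹ * g * σ) hconjr
      simpa [mul_assoc] using this.symm
    constructor
    · rw [Subgroup.mem_normalizer_iff]
      intro g
      constructor
      · intro hg
        obtain ⟨k, hk⟩ := Subgroup.mem_closure_singleton.mp hg
        rw [← hk, ← conj_zpow, hconjt]
        rw [Equiv.zsmul_addRight]
        exact haddmem _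
      · intro hg
        obtain ⟨k, hk⟩ := Subgroup.mem_closure_singleton.mp hg
        have hgeq : g = σ⁻¹ * t ^ k * σ := by
          have := congrArg (fun x => σ⁻¹ * x * σ) hk
          simpa [mul_assoc] using this.symm
        rw [hgeq, ← aux_conj_zpow σ t k, hconjt', Equiv.zsmul_addRight]
        exact haddmem _
    · rw [Subgroup.mem_normalizer_iff]
      intro g
      constructor
      · intro hg
        obtain ⟨k, hk⟩ := Subgroup.mem_closure_singleton.mp hg
        rw [← hk, ← conj_zpow, hconjr]
        exact Subgroup.mem_closure_singleton.mpr ⟨k, rfl⟩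
      · intro hg
        obtain ⟨k, hk⟩ := Subgroup.mem_closure_singleton.mp hg
        have hgeq : g = σ⁻¹ * r ^ k * σ := by
          have := congrArg (fun x => σ⁻¹ * x * σ) hk
          simpa [mul_assoc] using this.symm
        rw [hgeq, ← aux_conj_zpow σ r k, hconjr']
        exact Subgroup.mem_closure_singleton.mpr ⟨k, rfl⟩
end
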